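/- arXiv:1405.6516 — 5 statements merged into one kernel-verified Lean document; each statement's English description precedes it below -/
import Mathlib

section
/- Let q ∈ (0,2], let w ∈ ℂ with |w| ≤ 1, and let c, a ∈ ℂ. Then |w|²|c|² + (q/2)|(1 − |w|²)c − w a|² ≤ |c|² + (q/2)|a|². (This is the statement that multiplying an analytic function f with f(0)=c, f′(0)=a by the Blaschke factor b(z) = (z − w)/(1 − w̄ z) does not increase |f(0)|² + (q/2)|f′(0)|², since (bf)(0) = −w c and (bf)′(0) = (1−|w|²)c − w a up to unimodular factors.) -/
/-- **Blaschke factor contraction step.** For `0 < q ≤ 2`, `|w| ≤ 1` and `c, a ∈ ℂ`,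
`|w|²|c|² + (q/2)|(1-|w|²)c - wa|² ≤ |c|² + (q/2)|a|²`. -/
theorem blaschke_contraction (q : ℝ) (hq0 : 0 < q) (hq2 : q ≤ 2)
    (w c a : ℂ) (hw : ‖w‖ ≤ 1) :
    (‖w‖) ^ 2 * (‖c‖) ^ 2 +
      (q / 2) * (‖((1 - (‖w‖ : ℂ) ^ 2) * c) - w * a‖) ^ 2
      ≤ (‖c‖) ^ 2 + (q / 2) * (‖a‖) ^ 2 := by
  set r := ‖w‖ with hr
  have hr0 : 0 ≤ r := norm_nonneg w
  have hrr : (0:ℝ) ≤ 1 - r^2 := by nlinarith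
  have hcast : (1 - (r:ℂ)^2) = ((1 - r^2 : ℝ) : ℂ) := by push_cast; ring
  rw [hcast]
  set X := ((((1 - r^2 : ℝ) : ℂ) * c) * (starRingEnd ℂ) (w * a)).re with hX
  have habs : ∀ z : ℂ, ‖z‖ ^ 2 = Complex.normSq z := fun z => Complex.sq_norm z
  have hkey : ‖(((1 - r^2 : ℝ) : ℂ) * c) - w * a‖ ^ 2
      = (1 - r^2)^2 * ‖c‖ ^ 2 - 2 * X + r^2 * ‖a‖ ^ 2 := by
    have hnw : Complex.normSq w = r^2 := by rw [← Complex.sq_norm, hr]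
    rw [habs, Complex.normSq_sub, habs, habs, hnw]
    have h1 : Complex.normSq (((1 - r^2 : ℝ) : ℂ) * c) = (1 - r^2)^2 * Complex.normSq c := by
      rw [Complex.normSq_mul, Complex.normSq_ofReal]; ring
    have h2 : Complex.normSq (w * a) = r^2 * Complex.normSq a := by
      rw [Complex.normSq_mul, ← habs, ← habs, hr]
    rw [h1, h2, ← hX, habs a]; ring
  have hXbound : |X| ≤ (1 - r^2) * (‖c‖ * (r * ‖a‖)) := by
    have h := Complex.abs_re_le_norm ((((1 - r^2 : ℝ) : ℂ) * c) * (starRingEnd ℂ) (w * a))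
    rw [← hX] at h
    refine h.trans_eq ?_
    simp only [norm_mul, Complex.norm_conj, Complex.norm_real, Real.norm_eq_abs, abs_of_nonneg hrr]
    rw [← hr]; ring
  have hc0 : 0 ≤ ‖c‖ := norm_nonneg c
  have ha0 : 0 ≤ ‖a‖ := norm_nonneg a
  rw [hkey]
  have hXb := abs_le.mp hXbound
  nlinarith [sq_nonneg (r * ‖c‖ - ‖a‖),
    mul_nonneg (mul_nonneg hrr hc0) ha0,
    mul_nonneg hrr (sq_nonneg (r * ‖c‖ - ‖a‖)),
    mul_nonneg hrr (sq_nonneg (‖c‖)), sq_nonneg (1 - r^2)]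
end

section
/- Let a : ℕ → ℂ be a multiplicative arithmetic function, and suppose there exists C > 0 such that ∏_{p≤x, p prime}(1 + |a(p)|²/p) ≤ C ∑_{n≤x} μ(n)²|a(n)|²/n for all x ≥ 2. Then there exists a constant C′ > 0 such that ∑_{x/2 < p ≤ x, p prime} |a(p)|²/p ≤ C′ for all x ≥ 2. -/
open Finset

private lemma sum_image_le' {α β : Type*} [DecidableEq α] [DecidableEq β] (s : Finset α) (g : α → β) (f : β → ℝ)
    (hf : ∀ b, 0 ≤ f b) : ∑ b ∈ s.image g, f b ≤ ∑ x ∈ s, f (g x) := by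
  induction s using Finset.induction with
  | empty => simp
  | @insert a s ha ih =>
    rw [Finset.image_insert, Finset.sum_insert ha]
    by_cases hg : g a ∈ s.image g
    · rw [Finset.insert_eq_self.2 hg]
      linarith [hf (g a)]
    · rw [Finset.sum_insert hg]; linarith

private lemma map_prod_primes (a : ℕ → ℂ) (h1 : a 1 = 1)
    (hm : ∀ m n : ℕ, Nat.Coprime m n → a (m * n) = a m * a n) :
    ∀ s : Finset ℕ, (∀ p ∈ s, Nat.Prime p) → a (∏ p ∈ s, p) = ∏ p ∈ s, a p := by
  intro s
  induction s using Finset.induction with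
  | empty => simpa using h1
  | @insert p s hp ih =>
    intro hs
    have hpp : Nat.Prime p := hs p (mem_insert_self _ _)
    have hps : ∀ q ∈ s, Nat.Prime q := fun q hq => hs q (mem_insert_of_mem hq)
    have hcop : Nat.Coprime p (∏ q ∈ s, q) := by
      apply Nat.Coprime.prod_right
      intro q hq
      exact (Nat.coprime_primes hpp (hps q hq)).mpr (by rintro rfl; exact hp hq)
    rw [Finset.prod_insert hp, hm p _ hcop, ih hps, Finset.prod_insert hp]

private lemma sq_term_eq (a : ℕ → ℂ) (h1 : a 1 = 1)
    (hm : ∀ m n : ℕ, Nat.Coprime m n → a (m * n) = a m * a n)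
    {n : ℕ} (hn : Squarefree n) :
    ((ArithmeticFunction.moebius n : ℝ)) ^ 2 * (‖a n‖) ^ 2 / (n : ℝ)
      = ∏ p ∈ n.primeFactors, (‖a p‖) ^ 2 / (p : ℝ) := by
  have hmu : ((ArithmeticFunction.moebius n : ℝ)) ^ 2 = 1 := by
    have := ArithmeticFunction.moebius_sq_eq_one_of_squarefree hn
    exact_mod_cast congrArg (fun z : ℤ => (z : ℝ)) this
  have hprod : ∏ p ∈ n.primeFactors, p = n := Nat.prod_primeFactors_of_squarefree hn
  have ha : a n = ∏ p ∈ n.primeFactors, a p := by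
    conv_lhs => rw [← hprod]
    exact map_prod_primes a h1 hm _ (fun p hp => Nat.prime_of_mem_primeFactors hp)
  rw [hmu, one_mul, ha, norm_prod,
    show ((n:ℝ)) = ∏ p ∈ n.primeFactors, (p:ℝ) by rw [← Nat.cast_prod, hprod],
    ← Finset.prod_pow, ← Finset.prod_div_distrib]

private lemma sum_le_subsets (a : ℕ → ℂ) (h1 : a 1 = 1)
    (hm : ∀ m n : ℕ, Nat.Coprime m n → a (m * n) = a m * a n)
    (N : ℕ) (𝒜 : Finset (Finset ℕ))
    (hcov : ∀ n ∈ Finset.Icc 1 N, Squarefree n → n.primeFactors ∈ 𝒜) :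
    ∑ n ∈ Finset.Icc 1 N,
      ((ArithmeticFunction.moebius n : ℝ)) ^ 2 * (‖a n‖) ^ 2 / (n : ℝ)
      ≤ ∑ T ∈ 𝒜, ∏ p ∈ T, (‖a p‖) ^ 2 / (p : ℝ) := by
  have hzero : ∑ n ∈ Finset.Icc 1 N,
      ((ArithmeticFunction.moebius n : ℝ)) ^ 2 * (‖a n‖) ^ 2 / (n : ℝ)
      = ∑ n ∈ (Finset.Icc 1 N).filter Squarefree,
      ((ArithmeticFunction.moebius n : ℝ)) ^ 2 * (‖a n‖) ^ 2 / (n : ℝ) := by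
    refine (Finset.sum_filter_of_ne ?_).symm
    intro n _ hne
    by_contra hsq
    have : ArithmeticFunction.moebius n = 0 := by
      by_contra h0
      exact hsq (ArithmeticFunction.moebius_ne_zero_iff_squarefree.mp h0)
    rw [this] at hne; simp at hne
  rw [hzero]
  have hre : ∑ n ∈ (Finset.Icc 1 N).filter Squarefree,
      ((ArithmeticFunction.moebius n : ℝ)) ^ 2 * (‖a n‖) ^ 2 / (n : ℝ)
      = ∑ T ∈ ((Finset.Icc 1 N).filter Squarefree).image Nat.primeFactors,
        ∏ p ∈ T, (‖a p‖) ^ 2 / (p : ℝ) := by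
    rw [Finset.sum_image (by
      intro m hmm n hnn heq
      have hsm : Squarefree m := (Finset.mem_filter.mp hmm).2
      have hsn : Squarefree n := (Finset.mem_filter.mp hnn).2
      rw [← Nat.prod_primeFactors_of_squarefree hsm, ← Nat.prod_primeFactors_of_squarefree hsn, heq])]
    exact Finset.sum_congr rfl fun n hn =>
      sq_term_eq a h1 hm (Finset.mem_filter.mp hn).2
  rw [hre]
  refine Finset.sum_le_sum_of_subset_of_nonneg ?_ ?_
  · intro T hT
    obtain ⟨n, hn, rfl⟩ := Finset.mem_image.mp hT
    exact hcov n (Finset.mem_filter.mp hn).1 (Finset.mem_filter.mp hn).2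
  · intro T _ _
    exact Finset.prod_nonneg fun p _ => by positivity

private lemma powerset_sum_eq (t : ℕ → ℝ) (P' : Finset ℕ) :
    ∑ T ∈ P'.powerset, ∏ p ∈ T, t p = ∏ p ∈ P', (1 + t p) := by
  classical
  rw [show (fun p => 1 + t p) = fun p => t p + 1 by funext p; ring]
  rw [Finset.prod_add]
  exact (Finset.sum_congr rfl fun T _ => by simp).symm

private lemma sum_image_union_le (t : ℕ → ℝ) (ht : ∀ p, 0 ≤ t p)
    (P' : Finset ℕ) (ℬ : Finset (Finset ℕ)) (hd : ∀ b ∈ ℬ, Disjoint b P') :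
    ∑ T ∈ ((P'.powerset ×ˢ ℬ).image fun z => z.1 ∪ z.2), ∏ p ∈ T, t p
      ≤ (∏ p ∈ P', (1 + t p)) * ∑ b ∈ ℬ, ∏ p ∈ b, t p := by
  classical
  calc ∑ T ∈ ((P'.powerset ×ˢ ℬ).image fun z => z.1 ∪ z.2), ∏ p ∈ T, t p
      ≤ ∑ z ∈ P'.powerset ×ˢ ℬ, ∏ p ∈ z.1 ∪ z.2, t p := by
        exact sum_image_le' _ _ _ (fun T => Finset.prod_nonneg fun p _ => ht p)
    _ = ∑ z ∈ P'.powerset ×ˢ ℬ, (∏ p ∈ z.1, t p) * ∏ p ∈ z.2, t p := by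
        refine Finset.sum_congr rfl fun z hz => ?_
        obtain ⟨hz1, hz2⟩ := Finset.mem_product.mp hz
        exact Finset.prod_union (((hd z.2 hz2).symm.mono_left (Finset.mem_powerset.mp hz1)))
    _ = (∑ T ∈ P'.powerset, ∏ p ∈ T, t p) * ∑ b ∈ ℬ, ∏ p ∈ b, t p := by
        rw [Finset.sum_mul_sum, Finset.sum_product]
    _ = (∏ p ∈ P', (1 + t p)) * ∑ b ∈ ℬ, ∏ p ∈ b, t p := by rw [powerset_sum_eq]

private lemma sum_sq_le_sq (t : ℕ → ℝ) (ht : ∀ p, 0 ≤ t p) (s : Finset ℕ) :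
    ∑ p ∈ s, (t p) ^ 2 ≤ (∑ p ∈ s, t p) ^ 2 :=
  Finset.sum_sq_le_sq_sum_of_nonneg fun p _ => ht p

private lemma prod_one_add_ge (t : ℕ → ℝ) (ht : ∀ p, 0 ≤ t p) (s : Finset ℕ) :
    1 + (∑ p ∈ s, t p) + ((∑ p ∈ s, t p) ^ 2 - ∑ p ∈ s, (t p) ^ 2) / 2
      ≤ ∏ p ∈ s, (1 + t p) := by
  classical
  induction s using Finset.induction with
  | empty => simp
  | @insert q s hq ih =>
    rw [Finset.prod_insert hq, Finset.sum_insert hq, Finset.sum_insert hq]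
    have e2 : ∑ p ∈ s, (t p) ^ 2 ≤ (∑ p ∈ s, t p) ^ 2 := sum_sq_le_sq t ht s
    have h1 : 0 ≤ ∑ p ∈ s, t p := Finset.sum_nonneg fun p _ => ht p
    have h2 : 0 ≤ t q := ht q
    nlinarith [ih, mul_le_mul_of_nonneg_left ih h2]

private lemma pair_bound (a : ℕ → ℂ) (C : ℝ) (hC : 0 < C) (h1 : a 1 = 1)
    (hm : ∀ m n : ℕ, Nat.Coprime m n → a (m * n) = a m * a n)
    (h : ∀ x : ℝ, 2 ≤ x →
      ∏ p ∈ (Finset.Icc 1 ⌊x⌋₊).filter Nat.Prime,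
        (1 + (‖a p‖) ^ 2 / (p : ℝ))
      ≤ C * ∑ n ∈ Finset.Icc 1 ⌊x⌋₊,
        ((ArithmeticFunction.moebius n : ℝ)) ^ 2 * (‖a n‖) ^ 2 / (n : ℝ))
    (p q : ℕ) (hp : p.Prime) (hq : q.Prime) (hpq : p < q) :
    (1 + ‖a p‖ ^ 2 / (p : ℝ)) * (1 + ‖a q‖ ^ 2 / (q : ℝ))
      ≤ C * (1 + ‖a p‖ ^ 2 / (p : ℝ) + ‖a q‖ ^ 2 / (q : ℝ)) := by
  classical
  set t : ℕ → ℝ := fun r => ‖a r‖ ^ 2 / (r : ℝ) with htdef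
  have ht : ∀ r, 0 ≤ t r := fun r => by positivity
  have hx : (2 : ℝ) ≤ (q : ℝ) := by exact_mod_cast hq.two_le
  have H := h (q : ℝ) hx
  rw [Nat.floor_natCast] at H
  set P := (Finset.Icc 1 q).filter Nat.Prime with hPdef
  set X : Finset ℕ := {p, q} with hXdef
  set P' := P \ X with hP'def
  set ℬ : Finset (Finset ℕ) := {∅, {p}, {q}} with hBdef
  have hpP : p ∈ P := Finset.mem_filter.mpr
    ⟨Finset.mem_Icc.mpr ⟨hp.pos, hpq.le⟩, hp⟩
  have hqP : q ∈ P := Finset.mem_filter.mpr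
    ⟨Finset.mem_Icc.mpr ⟨hq.pos, le_refl q⟩, hq⟩
  have hcov : ∀ n ∈ Finset.Icc 1 q, Squarefree n →
      n.primeFactors ∈ (P'.powerset ×ˢ ℬ).image fun z => z.1 ∪ z.2 := by
    intro n hn hsn
    obtain ⟨hn1, hn2⟩ := Finset.mem_Icc.mp hn
    have hpf : n.primeFactors ⊆ P := by
      intro r hr
      have hrp := Nat.prime_of_mem_primeFactors hr
      have hrle : r ≤ n := Nat.le_of_dvd (by omega) (Nat.dvd_of_mem_primeFactors hr)
      exact Finset.mem_filter.mpr ⟨Finset.mem_Icc.mpr ⟨hrp.pos, le_trans hrle hn2⟩, hrp⟩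
    have hnot : ¬(p ∈ n.primeFactors ∧ q ∈ n.primeFactors) := by
      rintro ⟨hpn, hqn⟩
      have hdvd : p * q ∣ n :=
        Nat.Coprime.mul_dvd_of_dvd_of_dvd ((Nat.coprime_primes hp hq).mpr hpq.ne)
          (Nat.dvd_of_mem_primeFactors hpn) (Nat.dvd_of_mem_primeFactors hqn)
      have hle : p * q ≤ q := le_trans (Nat.le_of_dvd (by omega) hdvd) hn2
      have h2p : 2 ≤ p := hp.two_le
      nlinarith [hq.pos]
    refine Finset.mem_image.mpr ⟨(n.primeFactors \ X, n.primeFactors ∩ X),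
      Finset.mem_product.mpr ⟨Finset.mem_powerset.mpr
        (Finset.sdiff_subset_sdiff hpf (le_refl X)), ?_⟩,
      Finset.sdiff_union_inter _ _⟩
    by_cases hpn : p ∈ n.primeFactors <;> by_cases hqn : q ∈ n.primeFactors
    · exact absurd ⟨hpn, hqn⟩ hnot
    · have : n.primeFactors ∩ X = {p} := by
        ext r
        simp only [Finset.mem_inter, hXdef, Finset.mem_insert, Finset.mem_singleton]
        constructor
        · rintro ⟨hr, rfl | rfl⟩
          · rfl
          · exact absurd hr hqn
        · rintro rfl; exact ⟨hpn, Or.inl rfl⟩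
      rw [this]; simp [hBdef]
    · have : n.primeFactors ∩ X = {q} := by
        ext r
        simp only [Finset.mem_inter, hXdef, Finset.mem_insert, Finset.mem_singleton]
        constructor
        · rintro ⟨hr, rfl | rfl⟩
          · exact absurd hr hpn
          · rfl
        · rintro rfl; exact ⟨hqn, Or.inr rfl⟩
      rw [this]; simp [hBdef]
    · have : n.primeFactors ∩ X = ∅ := by
        ext r
        simp only [Finset.mem_inter, hXdef, Finset.mem_insert, Finset.mem_singleton,
          Finset.notMem_empty, iff_false, not_and]
        rintro hr (rfl | rfl)
        · exact hpn hr
        · exact hqn hr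
      rw [this]; simp [hBdef]
  have key := sum_le_subsets a h1 hm q _ hcov
  have hdisj : ∀ b ∈ ℬ, Disjoint b P' := by
    intro b hb
    have hbX : b ⊆ X := by
      simp only [hBdef, Finset.mem_insert, Finset.mem_singleton] at hb
      rcases hb with rfl | rfl | rfl
      · exact Finset.empty_subset _
      · simp [hXdef]
      · intro r hr; simp only [Finset.mem_singleton] at hr
        simp [hXdef, hr]
    exact (Finset.sdiff_disjoint.symm).mono_left hbX
  have key2 := sum_image_union_le t ht P' ℬ hdisj
  have hBsum : ∑ b ∈ ℬ, ∏ r ∈ b, t r = 1 + t p + t q := by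
    have e1 : (∅ : Finset ℕ) ∉ ({({p} : Finset ℕ), {q}} : Finset (Finset ℕ)) := by
      simp only [Finset.mem_insert, Finset.mem_singleton]
      rintro (hh | hh)
      · exact (Finset.singleton_ne_empty p) hh.symm
      · exact (Finset.singleton_ne_empty q) hh.symm
    have e2 : ({p} : Finset ℕ) ∉ ({({q} : Finset ℕ)} : Finset (Finset ℕ)) := by
      simp only [Finset.mem_singleton]
      exact Finset.singleton_injective.ne hpq.ne
    rw [hBdef, Finset.sum_insert e1, Finset.sum_insert e2, Finset.sum_singleton]
    simp only [Finset.prod_empty, Finset.prod_singleton]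
    ring
  have hXP : X ⊆ P := by
    rw [hXdef]
    exact Finset.insert_subset hpP (Finset.singleton_subset_iff.mpr hqP)
  have hsplit : ∏ r ∈ P, (1 + t r)
      = (∏ r ∈ P', (1 + t r)) * ((1 + t p) * (1 + t q)) := by
    rw [hP'def, ← Finset.prod_sdiff hXP, hXdef, Finset.prod_pair hpq.ne]
  have hR : 0 < ∏ r ∈ P', (1 + t r) :=
    Finset.prod_pos fun r _ => by have := ht r; linarith
  have hchain : (∏ r ∈ P', (1 + t r)) * ((1 + t p) * (1 + t q))
      ≤ (∏ r ∈ P', (1 + t r)) * (C * (1 + t p + t q)) := by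
    rw [← hsplit]
    calc ∏ r ∈ P, (1 + t r) ≤ C * ∑ n ∈ Finset.Icc 1 q,
          ((ArithmeticFunction.moebius n : ℝ)) ^ 2 * (‖a n‖) ^ 2 / (n : ℝ) := H
      _ ≤ C * ((∏ r ∈ P', (1 + t r)) * ∑ b ∈ ℬ, ∏ r ∈ b, t r) := by
          refine mul_le_mul_of_nonneg_left (le_trans key key2) hC.le
      _ = (∏ r ∈ P', (1 + t r)) * (C * (1 + t p + t q)) := by
          rw [hBsum]; ring
  exact le_of_mul_le_mul_left hchain hR

private lemma block_bound (a : ℕ → ℂ) (C : ℝ) (hC : 0 < C) (h1 : a 1 = 1)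
    (hm : ∀ m n : ℕ, Nat.Coprime m n → a (m * n) = a m * a n)
    (h : ∀ x : ℝ, 2 ≤ x →
      ∏ p ∈ (Finset.Icc 1 ⌊x⌋₊).filter Nat.Prime,
        (1 + (‖a p‖) ^ 2 / (p : ℝ))
      ≤ C * ∑ n ∈ Finset.Icc 1 ⌊x⌋₊,
        ((ArithmeticFunction.moebius n : ℝ)) ^ 2 * (‖a n‖) ^ 2 / (n : ℝ))
    (x : ℝ) (hx : 2 ≤ x) :
    ∏ p ∈ (Finset.Icc 1 ⌊x⌋₊).filter (fun p => Nat.Prime p ∧ x / 2 < (p : ℝ)),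
        (1 + ‖a p‖ ^ 2 / (p : ℝ))
      ≤ C * (1 + ∑ p ∈ (Finset.Icc 1 ⌊x⌋₊).filter (fun p => Nat.Prime p ∧ x / 2 < (p : ℝ)),
        ‖a p‖ ^ 2 / (p : ℝ)) := by
  classical
  set t : ℕ → ℝ := fun r => ‖a r‖ ^ 2 / (r : ℝ) with htdef
  have ht : ∀ r, 0 ≤ t r := fun r => by positivity
  have H := h x hx
  set N := ⌊x⌋₊ with hNdef
  have hNx : (N : ℝ) ≤ x := Nat.floor_le (by linarith)
  set P := (Finset.Icc 1 N).filter Nat.Prime with hPdef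
  set Bl := (Finset.Icc 1 N).filter (fun p => Nat.Prime p ∧ x / 2 < (p : ℝ)) with hBldef
  have hBlP : Bl = P.filter (fun p : ℕ => x / 2 < (p : ℝ)) := by
    rw [hPdef, Finset.filter_filter]
  set P' := P.filter (fun p : ℕ => ¬ x / 2 < (p : ℝ)) with hP'def
  set ℬ : Finset (Finset ℕ) := insert ∅ (Bl.image fun p => ({p} : Finset ℕ)) with hBdef
  have hcov : ∀ n ∈ Finset.Icc 1 N, Squarefree n →
      n.primeFactors ∈ (P'.powerset ×ˢ ℬ).image fun z => z.1 ∪ z.2 := by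
    intro n hn hsn
    obtain ⟨hn1, hn2⟩ := Finset.mem_Icc.mp hn
    have hpf : n.primeFactors ⊆ P := by
      intro r hr
      have hrp := Nat.prime_of_mem_primeFactors hr
      have hrle : r ≤ n := Nat.le_of_dvd (by omega) (Nat.dvd_of_mem_primeFactors hr)
      exact Finset.mem_filter.mpr ⟨Finset.mem_Icc.mpr ⟨hrp.pos, le_trans hrle hn2⟩, hrp⟩
    have honce : ∀ p ∈ n.primeFactors ∩ Bl, ∀ q ∈ n.primeFactors ∩ Bl, p = q := by
      intro p hp' q hq'
      obtain ⟨hpn, hpB⟩ := Finset.mem_inter.mp hp'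
      obtain ⟨hqn, hqB⟩ := Finset.mem_inter.mp hq'
      by_contra hne
      have hp : Nat.Prime p := (Finset.mem_filter.mp hpB).2.1
      have hq : Nat.Prime q := (Finset.mem_filter.mp hqB).2.1
      have hqhalf : x / 2 < (q : ℝ) := (Finset.mem_filter.mp hqB).2.2
      have hdvd : p * q ∣ n :=
        Nat.Coprime.mul_dvd_of_dvd_of_dvd ((Nat.coprime_primes hp hq).mpr hne)
          (Nat.dvd_of_mem_primeFactors hpn) (Nat.dvd_of_mem_primeFactors hqn)
      have hle : p * q ≤ N := le_trans (Nat.le_of_dvd (by omega) hdvd) hn2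
      have hle' : ((p : ℝ) * q) ≤ x := by
        calc ((p : ℝ) * q) = ((p * q : ℕ) : ℝ) := by push_cast; ring
          _ ≤ (N : ℝ) := by exact_mod_cast hle
          _ ≤ x := hNx
      have h2p : (2 : ℝ) ≤ (p : ℝ) := by exact_mod_cast hp.two_le
      nlinarith
    refine Finset.mem_image.mpr ⟨(n.primeFactors \ Bl, n.primeFactors ∩ Bl),
      Finset.mem_product.mpr ⟨Finset.mem_powerset.mpr ?_, ?_⟩,
      Finset.sdiff_union_inter _ _⟩
    · intro r hr
      obtain ⟨hrn, hrB⟩ := Finset.mem_sdiff.mp hr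
      have hrP : r ∈ P := hpf hrn
      refine Finset.mem_filter.mpr ⟨hrP, fun hhalf => hrB ?_⟩
      rw [hBlP]
      exact Finset.mem_filter.mpr ⟨hrP, hhalf⟩
    · rcases Finset.eq_empty_or_nonempty (n.primeFactors ∩ Bl) with he | ⟨p, hp⟩
      · rw [he, hBdef]; exact Finset.mem_insert_self _ _
      · have : n.primeFactors ∩ Bl = {p} := by
          ext r
          simp only [Finset.mem_singleton]
          constructor
          · intro hr; exact honce r hr p hp
          · rintro rfl; exact hp
        rw [this, hBdef]
        exact Finset.mem_insert_of_mem
          (Finset.mem_image.mpr ⟨p, (Finset.mem_inter.mp hp).2, rfl⟩)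
  have key := sum_le_subsets a h1 hm N _ hcov
  have hdisj : ∀ b ∈ ℬ, Disjoint b P' := by
    intro b hb
    rw [hBdef] at hb
    rcases Finset.mem_insert.mp hb with rfl | hb'
    · exact Finset.disjoint_empty_left _
    · obtain ⟨p, hpB, rfl⟩ := Finset.mem_image.mp hb'
      rw [Finset.disjoint_singleton_left, hP'def, Finset.mem_filter]
      rw [hBlP] at hpB
      push_neg
      intro _
      exact (Finset.mem_filter.mp hpB).2
  have key2 := sum_image_union_le t ht P' ℬ hdisj
  have hBsum : ∑ b ∈ ℬ, ∏ r ∈ b, t r = 1 + ∑ p ∈ Bl, t p := by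
    rw [hBdef, Finset.sum_insert (by
      intro hc
      obtain ⟨p, _, hpe⟩ := Finset.mem_image.mp hc
      exact Finset.singleton_ne_empty p hpe)]
    rw [Finset.sum_image (fun p _ q _ hpq => Finset.singleton_injective hpq)]
    simp only [Finset.prod_empty, Finset.prod_singleton]
  have hsplit : ∏ r ∈ P, (1 + t r)
      = (∏ r ∈ Bl, (1 + t r)) * ∏ r ∈ P', (1 + t r) := by
    rw [hBlP, hP'def, Finset.prod_filter_mul_prod_filter_not]
  have hR : 0 < ∏ r ∈ P', (1 + t r) :=
    Finset.prod_pos fun r _ => by have := ht r; linarith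
  have hchain : (∏ r ∈ P', (1 + t r)) * ∏ r ∈ Bl, (1 + t r)
      ≤ (∏ r ∈ P', (1 + t r)) * (C * (1 + ∑ p ∈ Bl, t p)) := by
    calc (∏ r ∈ P', (1 + t r)) * ∏ r ∈ Bl, (1 + t r)
        = ∏ r ∈ P, (1 + t r) := by rw [hsplit]; ring
      _ ≤ C * ∑ n ∈ Finset.Icc 1 N,
          ((ArithmeticFunction.moebius n : ℝ)) ^ 2 * (‖a n‖) ^ 2 / (n : ℝ) := H
      _ ≤ C * ((∏ r ∈ P', (1 + t r)) * ∑ b ∈ ℬ, ∏ r ∈ b, t r) :=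
          mul_le_mul_of_nonneg_left (le_trans key key2) hC.le
      _ = (∏ r ∈ P', (1 + t r)) * (C * (1 + ∑ p ∈ Bl, t p)) := by rw [hBsum]; ring
  exact le_of_mul_le_mul_left hchain hR

private lemma final_algebra (S Q C B : ℝ) (hS0 : 0 ≤ S) (hC : 0 < C) (hC1 : 1 ≤ C)
    (hB0 : 0 ≤ B) (hQ : Q ≤ B * S) (hkey : 1 + S + (S ^ 2 - Q) / 2 ≤ C * (1 + S)) :
    S ≤ 1 + 4 * C + B := by
  have hsq : S ^ 2 ≤ 2 * (C - 1) * (1 + S) + B * S := by linarith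
  rcases le_or_gt S 1 with hS1 | hS1
  · linarith
  · nlinarith [mul_pos (lt_trans zero_lt_one hS1) (lt_trans zero_lt_one hS1)]


/-- **Dyadic block bound.** If `∏_{p≤x}(1 + |a(p)|²/p) ≤ C ∑_{n≤x} μ(n)²|a(n)|²/n`
for all `x ≥ 2`, then `∑_{x/2 < p ≤ x} |a(p)|²/p` is uniformly bounded. -/
theorem dyadic_block_bounded (a : ℕ → ℂ)
    (hmul : a 1 = 1 ∧ ∀ m n : ℕ, Nat.Coprime m n → a (m * n) = a m * a n)
    (h : ∃ C : ℝ, 0 < C ∧ ∀ x : ℝ, 2 ≤ x →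
      ∏ p ∈ (Finset.Icc 1 ⌊x⌋₊).filter Nat.Prime,
        (1 + ‖a p‖ ^ 2 / (p : ℝ))
      ≤ C * ∑ n ∈ Finset.Icc 1 ⌊x⌋₊,
        ((ArithmeticFunction.moebius n : ℝ)) ^ 2 * ‖a n‖ ^ 2 / (n : ℝ)) :
    ∃ C' : ℝ, 0 < C' ∧ ∀ x : ℝ, 2 ≤ x →
      ∑ p ∈ (Finset.Icc 1 ⌊x⌋₊).filter (fun p => Nat.Prime p ∧ x / 2 < (p : ℝ)),
        ‖a p‖ ^ 2 / (p : ℝ) ≤ C' := by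
  classical
  obtain ⟨h1, hm⟩ := hmul
  obtain ⟨C, hC, h⟩ := h
  have ht : ∀ r : ℕ, 0 ≤ ‖a r‖ ^ 2 / (r : ℝ) := fun r => by positivity
  -- C ≥ 1
  have hC1 : 1 ≤ C := by
    have H := h 2 (le_refl 2)
    have hfl : ⌊(2 : ℝ)⌋₊ = 2 := by norm_num
    rw [hfl] at H
    have hfil : (Finset.Icc 1 2).filter Nat.Prime = {2} := by decide
    have hIcc : Finset.Icc 1 2 = {1, 2} := by decide
    rw [hfil, Finset.prod_singleton, hIcc,
      Finset.sum_pair (by norm_num : (1 : ℕ) ≠ 2)] at H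
    simp only [ArithmeticFunction.moebius_apply_one,
      ArithmeticFunction.moebius_apply_prime Nat.prime_two, h1, map_one, norm_one, one_pow,
      Nat.cast_one, Nat.cast_ofNat, mul_one, div_one, one_mul] at H
    push_cast at H
    have h2 : (0 : ℝ) ≤ ‖a 2‖ ^ 2 / 2 := by positivity
    nlinarith
  -- uniform bound on prime values
  obtain ⟨B, hB0, hB⟩ : ∃ B : ℝ, 0 ≤ B ∧
      ∀ p : ℕ, p.Prime → ‖a p‖ ^ 2 / (p : ℝ) ≤ B := by
    by_cases hall : ∀ p : ℕ, p.Prime → ‖a p‖ ^ 2 / (p : ℝ) ≤ 2 * C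
    · exact ⟨2 * C, by positivity, hall⟩
    · push_neg at hall
      obtain ⟨r, hr, hgt⟩ := hall
      have hM0 : 0 ≤ ‖a r‖ ^ 2 / (r : ℝ) := ht r
      refine ⟨max (‖a r‖ ^ 2 / (r : ℝ))
        ((C - 1) * (1 + ‖a r‖ ^ 2 / (r : ℝ))),
        le_trans hM0 (le_max_left _ _), ?_⟩
      intro q hq
      rcases eq_or_ne q r with rfl | hne
      · exact le_max_left _ _
      · have hpair : (1 + ‖a q‖ ^ 2 / (q : ℝ)) *
            (1 + ‖a r‖ ^ 2 / (r : ℝ))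
            ≤ C * (1 + ‖a q‖ ^ 2 / (q : ℝ) + ‖a r‖ ^ 2 / (r : ℝ)) := by
          rcases hne.lt_or_gt with hlt | hlt
          · exact pair_bound a C hC h1 hm h q r hq hr hlt
          · calc (1 + ‖a q‖ ^ 2 / (q : ℝ)) *
                (1 + ‖a r‖ ^ 2 / (r : ℝ))
                = (1 + ‖a r‖ ^ 2 / (r : ℝ)) *
                  (1 + ‖a q‖ ^ 2 / (q : ℝ)) := by ring
              _ ≤ C * (1 + ‖a r‖ ^ 2 / (r : ℝ) +
                  ‖a q‖ ^ 2 / (q : ℝ)) :=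
                pair_bound a C hC h1 hm h r q hr hq hlt
              _ = C * (1 + ‖a q‖ ^ 2 / (q : ℝ) +
                  ‖a r‖ ^ 2 / (r : ℝ)) := by ring
        have htq : 0 ≤ ‖a q‖ ^ 2 / (q : ℝ) := ht q
        have hstep : ‖a q‖ ^ 2 / (q : ℝ)
            ≤ (C - 1) * (1 + ‖a r‖ ^ 2 / (r : ℝ)) := by
          nlinarith [mul_nonneg htq (by linarith : (0 : ℝ) ≤
            ‖a r‖ ^ 2 / (r : ℝ) - 2 * C)]
        exact le_trans hstep (le_max_right _ _)
  refine ⟨1 + 4 * C + B, by linarith, ?_⟩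
  intro x hx
  have hkey : 1 + (∑ p ∈ (Finset.Icc 1 ⌊x⌋₊).filter
        (fun p => Nat.Prime p ∧ x / 2 < (p : ℝ)), ‖a p‖ ^ 2 / (p : ℝ))
      + ((∑ p ∈ (Finset.Icc 1 ⌊x⌋₊).filter
        (fun p => Nat.Prime p ∧ x / 2 < (p : ℝ)), ‖a p‖ ^ 2 / (p : ℝ)) ^ 2
        - ∑ p ∈ (Finset.Icc 1 ⌊x⌋₊).filter
        (fun p => Nat.Prime p ∧ x / 2 < (p : ℝ)), (‖a p‖ ^ 2 / (p : ℝ)) ^ 2) / 2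
      ≤ C * (1 + ∑ p ∈ (Finset.Icc 1 ⌊x⌋₊).filter
        (fun p => Nat.Prime p ∧ x / 2 < (p : ℝ)), ‖a p‖ ^ 2 / (p : ℝ)) :=
    le_trans (prod_one_add_ge (fun r => ‖a r‖ ^ 2 / (r : ℝ)) ht _)
      (block_bound a C hC h1 hm h x hx)
  have hQ : ∑ p ∈ (Finset.Icc 1 ⌊x⌋₊).filter
        (fun p => Nat.Prime p ∧ x / 2 < (p : ℝ)), (‖a p‖ ^ 2 / (p : ℝ)) ^ 2
      ≤ B * ∑ p ∈ (Finset.Icc 1 ⌊x⌋₊).filter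
        (fun p => Nat.Prime p ∧ x / 2 < (p : ℝ)), ‖a p‖ ^ 2 / (p : ℝ) := by
    rw [Finset.mul_sum]
    refine Finset.sum_le_sum ?_
    intro p hp
    have hpP : Nat.Prime p := (Finset.mem_filter.mp hp).2.1
    have := hB p hpP
    have := ht p
    nlinarith
  have hS0 : 0 ≤ ∑ p ∈ (Finset.Icc 1 ⌊x⌋₊).filter
      (fun p => Nat.Prime p ∧ x / 2 < (p : ℝ)), ‖a p‖ ^ 2 / (p : ℝ) :=
    Finset.sum_nonneg fun p _ => ht p
  exact final_algebra _ _ C B hS0 hC hC1 hB0 hQ hkey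
end

section
/- Let a : ℕ → ℂ be a multiplicative arithmetic function, and suppose there exists C > 0 such that ∏_{p≤x, p prime}(1 + |a(p)|²/p) ≤ C ∑_{n≤x} μ(n)²|a(n)|²/n for all x ≥ 2. Then there exists a constant C′ > 0 such that λ_a(x) = ∑_{p≤x, p prime} |a(p)|²/p ≤ C′ log x for all x ≥ 2. -/
open Finset

namespace LambdaLogAux

lemma one_add_sum_le_prod (s : Finset ℕ) (f : ℕ → ℝ) :
    (∀ i ∈ s, 0 ≤ f i) → 1 + ∑ i ∈ s, f i ≤ ∏ i ∈ s, (1 + f i) := by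
  classical
  induction s using Finset.cons_induction with
  | empty => simp
  | cons p s hp ih =>
    intro hf
    rw [Finset.sum_cons, Finset.prod_cons]
    have h0 : 0 ≤ f p := hf p (Finset.mem_cons_self p s)
    have hs : ∀ i ∈ s, 0 ≤ f i := fun i hi => hf i (Finset.mem_cons_of_mem hi)
    have ihs := ih hs
    have hsum : 0 ≤ ∑ i ∈ s, f i := Finset.sum_nonneg hs
    nlinarith

lemma sum_sf_le_prod (c : ℕ → ℝ) (hc : ∀ p, 0 ≤ c p) (N M : ℕ) (hNM : N ≤ M) :
    ∑ n ∈ Finset.Icc 1 N, (if Squarefree n then ∏ p ∈ n.primeFactors, c p else 0)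
      ≤ ∏ p ∈ (Finset.Icc 1 M).filter Nat.Prime, (1 + c p) := by
  classical
  rw [← Finset.sum_filter]
  set F := (Finset.Icc 1 N).filter Squarefree with hF
  have hinj : ∀ x ∈ F, ∀ y ∈ F, x.primeFactors = y.primeFactors → x = y := by
    intro x hx y hy hxy
    have hxs : Squarefree x := (Finset.mem_filter.mp hx).2
    have hys : Squarefree y := (Finset.mem_filter.mp hy).2
    rw [← Nat.prod_primeFactors_of_squarefree hxs, ← Nat.prod_primeFactors_of_squarefree hys, hxy]
  have himg : F.image Nat.primeFactors ⊆ ((Finset.Icc 1 M).filter Nat.Prime).powerset := by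
    intro S hS
    rw [Finset.mem_powerset]
    obtain ⟨n, hn, rfl⟩ := Finset.mem_image.mp hS
    intro q hq
    have hq1 := Nat.prime_of_mem_primeFactors hq
    have hq2 := Nat.dvd_of_mem_primeFactors hq
    have hn1 : 1 ≤ n := (Finset.mem_Icc.mp (Finset.mem_filter.mp hn).1).1
    have hnN : n ≤ N := (Finset.mem_Icc.mp (Finset.mem_filter.mp hn).1).2
    have : q ≤ n := Nat.le_of_dvd (by omega) hq2
    exact Finset.mem_filter.mpr ⟨Finset.mem_Icc.mpr ⟨hq1.one_lt.le, by omega⟩, hq1⟩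
  calc ∑ n ∈ F, ∏ p ∈ n.primeFactors, c p
      = ∑ S ∈ F.image Nat.primeFactors, ∏ p ∈ S, c p :=
        (Finset.sum_image (f := fun S => ∏ p ∈ S, c p) hinj).symm
    _ ≤ ∑ S ∈ ((Finset.Icc 1 M).filter Nat.Prime).powerset, ∏ p ∈ S, c p := by
        apply Finset.sum_le_sum_of_subset_of_nonneg himg
        intro S _ _
        exact Finset.prod_nonneg fun p _ => hc p
    _ = ∏ p ∈ (Finset.Icc 1 M).filter Nat.Prime, (1 + c p) := by
        rw [show ∀ s : Finset ℕ, ∏ p ∈ s, (1 + c p) = ∏ p ∈ s, (c p + 1) from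
          fun s => Finset.prod_congr rfl (fun p _ => by ring)]
        rw [Finset.prod_add]
        simp

lemma abs_sq_prod (a : ℕ → ℂ) (ha1 : a 1 = 1)
    (ha2 : ∀ m n : ℕ, Nat.Coprime m n → a (m * n) = a m * a n) {n : ℕ} (hn : Squarefree n) :
    ‖a n‖ ^ 2 = ∏ p ∈ n.primeFactors, ‖a p‖ ^ 2 := by
  have key := Nat.multiplicative_factorization (f := fun m => ‖a m‖ ^ 2)
    (by intro x y hxy; rw [ha2 x y hxy, norm_mul, mul_pow])
    (by simp [ha1]) hn.ne_zero
  rw [key, Finsupp.prod]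
  rw [Nat.support_factorization]
  apply Finset.prod_congr rfl
  intro p hp
  have hle := hn.natFactorization_le_one p
  have hne : n.factorization p ≠ 0 := by
    rw [← Nat.support_factorization] at hp
    exact Finsupp.mem_support_iff.mp hp
  have h1 : n.factorization p = 1 := by omega
  rw [h1, pow_one]

lemma term_eq (a : ℕ → ℂ) (ha1 : a 1 = 1)
    (ha2 : ∀ m n : ℕ, Nat.Coprime m n → a (m * n) = a m * a n) (k : ℕ) {n : ℕ} (hn : n ≠ 0) :
    ((ArithmeticFunction.moebius n : ℝ)) ^ 2 * ‖a n‖ ^ 2 / (n : ℝ) ^ k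
      = if Squarefree n then ∏ p ∈ n.primeFactors, (‖a p‖ ^ 2 / (p : ℝ) ^ k)
        else 0 := by
  by_cases hsq : Squarefree n
  · have hmu : ArithmeticFunction.moebius n = (-1) ^ ArithmeticFunction.cardFactors n :=
      ArithmeticFunction.moebius_apply_of_squarefree hsq
    have hmu2 : ((ArithmeticFunction.moebius n : ℝ)) ^ 2 = 1 := by
      rw [hmu]; push_cast
      rw [← pow_mul, mul_comm (ArithmeticFunction.cardFactors n) 2, pow_mul]
      norm_num
    have habs := abs_sq_prod a ha1 ha2 hsq
    have hprod : (n : ℝ) ^ k = ∏ p ∈ n.primeFactors, (p : ℝ) ^ k := by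
      conv_lhs => rw [← Nat.prod_primeFactors_of_squarefree hsq]
      push_cast
      rw [← Finset.prod_pow]
    rw [if_pos hsq, hmu2, one_mul, habs, hprod, ← Finset.prod_div_distrib]
  · rw [if_neg hsq, ArithmeticFunction.moebius_eq_zero_of_not_squarefree hsq]
    norm_num

lemma sum_mu_le_prod (a : ℕ → ℂ) (ha1 : a 1 = 1)
    (ha2 : ∀ m n : ℕ, Nat.Coprime m n → a (m * n) = a m * a n) (k : ℕ) (N M : ℕ) (hNM : N ≤ M) :
    ∑ n ∈ Finset.Icc 1 N,
        ((ArithmeticFunction.moebius n : ℝ)) ^ 2 * ‖a n‖ ^ 2 / (n : ℝ) ^ k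
      ≤ ∏ p ∈ (Finset.Icc 1 M).filter Nat.Prime, (1 + ‖a p‖ ^ 2 / (p : ℝ) ^ k) := by
  have := sum_sf_le_prod (fun p => ‖a p‖ ^ 2 / (p : ℝ) ^ k)
    (fun p => by positivity) N M hNM
  refine le_trans (le_of_eq (Finset.sum_congr rfl fun n hn => ?_)) this
  have hn1 : 1 ≤ n := (Finset.mem_Icc.mp hn).1
  exact term_eq a ha1 ha2 k (by omega)

end LambdaLogAux


open LambdaLogAux in
set_option maxHeartbeats 1000000 in
/-- **Logarithmic growth of `λ_a`.** If `∏_{p≤x}(1 + |a(p)|²/p) ≤ C ∑_{n≤x} μ(n)²|a(n)|²/n`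
for all `x ≥ 2`, then `λ_a(x) = ∑_{p≤x} |a(p)|²/p ≪ log x`. -/
theorem lambda_log_growth (a : ℕ → ℂ)
    (hmul : a 1 = 1 ∧ ∀ m n : ℕ, Nat.Coprime m n → a (m * n) = a m * a n)
    (h : ∃ C : ℝ, 0 < C ∧ ∀ x : ℝ, 2 ≤ x →
      ∏ p ∈ (Finset.Icc 1 ⌊x⌋₊).filter Nat.Prime,
        (1 + ‖a p‖ ^ 2 / (p : ℝ))
      ≤ C * ∑ n ∈ Finset.Icc 1 ⌊x⌋₊,
        ((ArithmeticFunction.moebius n : ℝ)) ^ 2 * ‖a n‖ ^ 2 / (n : ℝ)) :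
    ∃ C' : ℝ, 0 < C' ∧ ∀ x : ℝ, 2 ≤ x →
      ∑ p ∈ (Finset.Icc 1 ⌊x⌋₊).filter Nat.Prime,
        ‖a p‖ ^ 2 / (p : ℝ) ≤ C' * Real.log x := by
  classical
  obtain ⟨ha1, ha2⟩ := hmul
  obtain ⟨C, hC0, hC⟩ := h
  have ht0 : ∀ p : ℕ, 0 ≤ ‖a p‖ ^ 2 / (p : ℝ) := fun p => by positivity
  have hlog2 : 0 < Real.log 2 := Real.log_pos (by norm_num)
  -- C ≥ 1
  have hC1 : 1 ≤ C := by
    have hf2 : ⌊(2 : ℝ)⌋₊ = 2 := by norm_num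
    have h2 := hC 2 le_rfl
    rw [hf2] at h2
    have hSG := sum_mu_le_prod a ha1 ha2 1 2 2 le_rfl
    simp only [pow_one] at hSG
    have hS1 : (1 : ℝ) ≤ ∑ n ∈ Finset.Icc 1 2,
        ((ArithmeticFunction.moebius n : ℝ)) ^ 2 * ‖a n‖ ^ 2 / (n : ℝ) := by
      have hmem : (1 : ℕ) ∈ Finset.Icc 1 2 := by simp
      have := Finset.single_le_sum
        (f := fun n => ((ArithmeticFunction.moebius n : ℝ)) ^ 2 * ‖a n‖ ^ 2 / (n : ℝ))
        (fun n _ => by positivity) hmem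
      simpa [ha1, ArithmeticFunction.moebius_apply_one] using this
    nlinarith [h2, hSG, hS1]
  have hlogC : 0 ≤ Real.log C := Real.log_nonneg hC1
  -- monotonicity of partial products
  have hGmono : ∀ N M : ℕ, N ≤ M →
      ∏ p ∈ (Finset.Icc 1 N).filter Nat.Prime, (1 + ‖a p‖ ^ 2 / (p : ℝ))
        ≤ ∏ p ∈ (Finset.Icc 1 M).filter Nat.Prime, (1 + ‖a p‖ ^ 2 / (p : ℝ)) := by
    intro N M hNM
    have hsub : (Finset.Icc 1 N).filter Nat.Prime ⊆ (Finset.Icc 1 M).filter Nat.Prime :=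
      Finset.filter_subset_filter _ (Finset.Icc_subset_Icc_right hNM)
    rw [← Finset.prod_sdiff hsub]
    have h1 : (1 : ℝ) ≤ ∏ p ∈ ((Finset.Icc 1 M).filter Nat.Prime \
        (Finset.Icc 1 N).filter Nat.Prime), (1 + ‖a p‖ ^ 2 / (p : ℝ)) := by
      calc (1 : ℝ) = ∏ p ∈ ((Finset.Icc 1 M).filter Nat.Prime \
            (Finset.Icc 1 N).filter Nat.Prime), 1 := by simp
        _ ≤ _ := Finset.prod_le_prod (fun i _ => zero_le_one) (fun i _ => by nlinarith [ht0 i])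
    exact le_mul_of_one_le_left (Finset.prod_nonneg fun p _ => by nlinarith [ht0 p]) h1
  -- Step 4 : if the product below p is at least 2C then t p ≤ 2C.
  have key4 : ∀ p : ℕ, p.Prime →
      2 * C ≤ ∏ q ∈ (Finset.Icc 1 (p - 1)).filter Nat.Prime,
        (1 + ‖a q‖ ^ 2 / (q : ℝ)) →
      ‖a p‖ ^ 2 / (p : ℝ) ≤ 2 * C := by
    intro p hp hR
    have hp1 : 1 ≤ p := hp.one_lt.le
    have hx := hC (p : ℝ) (by exact_mod_cast hp.two_le)
    rw [Nat.floor_natCast] at hx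
    have hPins : (Finset.Icc 1 p).filter Nat.Prime
        = insert p ((Finset.Icc 1 (p - 1)).filter Nat.Prime) := by
      ext q
      simp only [Finset.mem_filter, Finset.mem_insert, Finset.mem_Icc]
      constructor
      · rintro ⟨⟨h1, h2⟩, hq⟩
        by_cases hqp : q = p
        · exact Or.inl hqp
        · exact Or.inr ⟨⟨h1, by omega⟩, hq⟩
      · rintro (rfl | ⟨⟨h1, h2⟩, hq⟩)
        · exact ⟨⟨hp1, le_rfl⟩, hp⟩
        · exact ⟨⟨h1, by omega⟩, hq⟩
    have hpnot : p ∉ (Finset.Icc 1 (p - 1)).filter Nat.Prime := by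
      simp only [Finset.mem_filter, Finset.mem_Icc]
      rintro ⟨⟨_, h2⟩, _⟩
      omega
    have hIcc : Finset.Icc 1 p = insert p (Finset.Icc 1 (p - 1)) := by
      ext q; simp only [Finset.mem_insert, Finset.mem_Icc]; omega
    have hpnotIcc : p ∉ Finset.Icc 1 (p - 1) := by
      simp only [Finset.mem_Icc]; omega
    rw [hPins, Finset.prod_insert hpnot, hIcc, Finset.sum_insert hpnotIcc] at hx
    have hgp : ((ArithmeticFunction.moebius p : ℝ)) ^ 2 * ‖a p‖ ^ 2 / (p : ℝ)
        = ‖a p‖ ^ 2 / (p : ℝ) := by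
      rw [ArithmeticFunction.moebius_apply_prime hp]
      push_cast
      ring
    rw [hgp] at hx
    have hS' := sum_mu_le_prod a ha1 ha2 1 (p - 1) (p - 1) le_rfl
    simp only [pow_one] at hS'
    set R := ∏ q ∈ (Finset.Icc 1 (p - 1)).filter Nat.Prime,
      (1 + ‖a q‖ ^ 2 / (q : ℝ)) with hRdef
    set tp := ‖a p‖ ^ 2 / (p : ℝ) with htp
    have hRpos : 0 < R := Finset.prod_pos fun q _ => by nlinarith [ht0 q]
    have hSle : ∑ n ∈ Finset.Icc 1 (p - 1),
        ((ArithmeticFunction.moebius n : ℝ)) ^ 2 * ‖a n‖ ^ 2 / (n : ℝ) ≤ R := hS'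
    have htp0 : 0 ≤ tp := ht0 p
    nlinarith [hx, hSle, hRpos, htp0, hR, hC1,
      mul_le_mul_of_nonneg_left hSle (le_of_lt hC0)]
  -- Step 3 : Rankin-type bound for primes with t p ≤ M.
  have key3 : ∀ x : ℝ, 2 ≤ x → ∀ s : Finset ℕ,
      s ⊆ (Finset.Icc 1 ⌊x⌋₊).filter Nat.Prime → ∀ M : ℝ, 0 ≤ M →
      (∀ p ∈ s, ‖a p‖ ^ 2 / (p : ℝ) ≤ M) →
      ∑ p ∈ s, ‖a p‖ ^ 2 / (p : ℝ)
        ≤ 2 * (1 + M) * (Real.log C + Real.log x) := by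
    intro x hx s hs M hM0 hsM
    have hx0 : (0 : ℝ) < x := by linarith
    set N := ⌊x⌋₊ with hN
    have hfloor : (N : ℝ) ≤ x := Nat.floor_le (by linarith)
    have h1 := hC x hx
    -- h2 : S ≤ x * S₂
    have h2 : ∑ n ∈ Finset.Icc 1 N,
        ((ArithmeticFunction.moebius n : ℝ)) ^ 2 * ‖a n‖ ^ 2 / (n : ℝ)
        ≤ x * ∑ n ∈ Finset.Icc 1 N,
          ((ArithmeticFunction.moebius n : ℝ)) ^ 2 * ‖a n‖ ^ 2 / (n : ℝ) ^ 2 := by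
      rw [Finset.mul_sum]
      apply Finset.sum_le_sum
      intro n hn
      have hn1 : 1 ≤ n := (Finset.mem_Icc.mp hn).1
      have hnN : n ≤ N := (Finset.mem_Icc.mp hn).2
      have hnx : (n : ℝ) ≤ x := le_trans (by exact_mod_cast hnN) hfloor
      have hnpos : (0 : ℝ) < (n : ℝ) := by exact_mod_cast hn1
      have hne : (n : ℝ) ≠ 0 := ne_of_gt hnpos
      have e : x * (((ArithmeticFunction.moebius n : ℝ)) ^ 2 * ‖a n‖ ^ 2 / (n : ℝ) ^ 2)
          = ((ArithmeticFunction.moebius n : ℝ)) ^ 2 * ‖a n‖ ^ 2 / (n : ℝ)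
            * (x / (n : ℝ)) := by
        field_simp
      rw [e]
      exact le_mul_of_one_le_right (by positivity) ((one_le_div hnpos).mpr hnx)
    have h3 := sum_mu_le_prod a ha1 ha2 2 N N le_rfl
    set G := ∏ p ∈ (Finset.Icc 1 N).filter Nat.Prime,
      (1 + ‖a p‖ ^ 2 / (p : ℝ)) with hGdef
    set G2 := ∏ p ∈ (Finset.Icc 1 N).filter Nat.Prime,
      (1 + ‖a p‖ ^ 2 / (p : ℝ) ^ 2) with hG2def
    have hGpos : 0 < G := Finset.prod_pos fun q _ => by nlinarith [ht0 q]
    have hG2pos : 0 < G2 := Finset.prod_pos fun q _ => by positivity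
    have h4 : G ≤ C * x * G2 := by
      calc G ≤ C * ∑ n ∈ Finset.Icc 1 N,
            ((ArithmeticFunction.moebius n : ℝ)) ^ 2 * ‖a n‖ ^ 2 / (n : ℝ) := h1
        _ ≤ C * (x * ∑ n ∈ Finset.Icc 1 N,
            ((ArithmeticFunction.moebius n : ℝ)) ^ 2 * ‖a n‖ ^ 2 / (n : ℝ) ^ 2) :=
            mul_le_mul_of_nonneg_left h2 (le_of_lt hC0)
        _ ≤ C * (x * G2) := by
            apply mul_le_mul_of_nonneg_left _ (le_of_lt hC0)
            exact mul_le_mul_of_nonneg_left h3 (le_of_lt hx0)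
        _ = C * x * G2 := by ring
    have h5 : Real.log G ≤ Real.log C + Real.log x + Real.log G2 := by
      calc Real.log G ≤ Real.log (C * x * G2) := Real.log_le_log hGpos h4
        _ = Real.log C + Real.log x + Real.log G2 := by
            rw [Real.log_mul (by positivity) (ne_of_gt hG2pos),
              Real.log_mul (ne_of_gt hC0) (ne_of_gt hx0)]
    have h6 : Real.log G = ∑ p ∈ (Finset.Icc 1 N).filter Nat.Prime,
        Real.log (1 + ‖a p‖ ^ 2 / (p : ℝ)) := by
      rw [hGdef]
      exact Real.log_prod fun p _ => by nlinarith [ht0 p]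
    have h7 : Real.log G2 = ∑ p ∈ (Finset.Icc 1 N).filter Nat.Prime,
        Real.log (1 + ‖a p‖ ^ 2 / (p : ℝ) ^ 2) := by
      rw [hG2def]
      exact Real.log_prod fun p _ => by positivity
    have h8 : ∑ p ∈ (Finset.Icc 1 N).filter Nat.Prime,
        (Real.log (1 + ‖a p‖ ^ 2 / (p : ℝ))
          - Real.log (1 + ‖a p‖ ^ 2 / (p : ℝ) ^ 2))
        ≤ Real.log C + Real.log x := by
      rw [Finset.sum_sub_distrib, ← h6, ← h7]
      linarith
    have hterm0 : ∀ p ∈ (Finset.Icc 1 N).filter Nat.Prime,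
        0 ≤ Real.log (1 + ‖a p‖ ^ 2 / (p : ℝ))
          - Real.log (1 + ‖a p‖ ^ 2 / (p : ℝ) ^ 2) := by
      intro p hp
      have hpp : p.Prime := (Finset.mem_filter.mp hp).2
      have hp2 : (2 : ℝ) ≤ (p : ℝ) := by exact_mod_cast hpp.two_le
      have hd : ‖a p‖ ^ 2 / (p : ℝ) ^ 2 ≤ ‖a p‖ ^ 2 / (p : ℝ) := by
        rw [div_le_div_iff₀ (by positivity) (by linarith)]
        nlinarith [mul_nonneg (by positivity : (0:ℝ) ≤ ‖a p‖ ^ 2)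
          (by nlinarith : (0:ℝ) ≤ (p : ℝ) ^ 2 - (p : ℝ))]
      have := Real.log_le_log (by positivity) (by linarith : 1 + ‖a p‖ ^ 2 / (p:ℝ)^2
          ≤ 1 + ‖a p‖ ^ 2 / (p : ℝ))
      linarith
    have h10 : ∑ p ∈ s,
        (Real.log (1 + ‖a p‖ ^ 2 / (p : ℝ))
          - Real.log (1 + ‖a p‖ ^ 2 / (p : ℝ) ^ 2))
        ≤ Real.log C + Real.log x := by
      refine le_trans (Finset.sum_le_sum_of_subset_of_nonneg hs ?_) h8
      intro p hp _
      exact hterm0 p hp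
    have h11 : ∀ p ∈ s, ‖a p‖ ^ 2 / (p : ℝ) / (2 * (1 + M))
        ≤ Real.log (1 + ‖a p‖ ^ 2 / (p : ℝ))
          - Real.log (1 + ‖a p‖ ^ 2 / (p : ℝ) ^ 2) := by
      intro p hp
      have hpp : p.Prime := (Finset.mem_filter.mp (hs hp)).2
      have hp2 : (2 : ℝ) ≤ (p : ℝ) := by exact_mod_cast hpp.two_le
      set T := ‖a p‖ ^ 2 / (p : ℝ) with hT
      have hT0 : 0 ≤ T := ht0 p
      have hTM : T ≤ M := hsM p hp
      -- c2 p ≤ T / 2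
      have hc2 : ‖a p‖ ^ 2 / (p : ℝ) ^ 2 ≤ T / 2 := by
        rw [hT, div_div, div_le_div_iff₀ (by positivity) (by positivity)]
        nlinarith [mul_nonneg (by positivity : (0:ℝ) ≤ ‖a p‖ ^ 2)
          (by nlinarith : (0:ℝ) ≤ (p : ℝ) ^ 2 - (p : ℝ) * 2)]
      have hlog1 : Real.log (1 + ‖a p‖ ^ 2 / (p : ℝ) ^ 2)
          ≤ Real.log (1 + T / 2) := by
        apply Real.log_le_log (by positivity)
        linarith
      have hkey : Real.log (1 + T) - Real.log (1 + T / 2) ≥ (T / 2) / (1 + T) := by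
        have hpos1 : (0 : ℝ) < 1 + T := by linarith
        have hpos2 : (0 : ℝ) < 1 + T / 2 := by linarith
        have hlsub := Real.log_le_sub_one_of_pos (x := (1 + T / 2) / (1 + T)) (by positivity)
        rw [Real.log_div (ne_of_gt hpos2) (ne_of_gt hpos1)] at hlsub
        have heq : (1 + T / 2) / (1 + T) - 1 = -((T / 2) / (1 + T)) := by
          field_simp
          ring
        linarith [hlsub, heq ▸ hlsub]
      have hfinal : T / (2 * (1 + M)) ≤ (T / 2) / (1 + T) := by
        have e : T / 2 / (1 + T) = T / (2 * (1 + T)) := div_div T 2 (1 + T)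
        have h2' : T / (2 * (1 + M)) ≤ T / (2 * (1 + T)) :=
          (div_le_div_iff₀ (by positivity) (by positivity)).mpr
            (by nlinarith [mul_nonneg hT0 (sub_nonneg.mpr hTM)])
        exact le_trans h2' (le_of_eq e.symm)
      linarith [hlog1, hkey, hfinal]
    have h12 : ∑ p ∈ s, ‖a p‖ ^ 2 / (p : ℝ) / (2 * (1 + M))
        ≤ Real.log C + Real.log x :=
      le_trans (Finset.sum_le_sum h11) h10
    rw [← Finset.sum_div] at h12
    have hD : (0 : ℝ) < 2 * (1 + M) := by linarith
    rw [div_le_iff₀ hD] at h12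
    linarith [h12]
  -- Assembly
  by_cases hall : ∀ p : ℕ, p.Prime →
      ∏ q ∈ (Finset.Icc 1 (p - 1)).filter Nat.Prime,
        (1 + ‖a q‖ ^ 2 / (q : ℝ)) < 2 * C
  · refine ⟨2 * C / Real.log 2 + 1, by positivity, ?_⟩
    intro x hx
    have hx0 : (0 : ℝ) < x := by linarith
    obtain ⟨p', hp'N, hp'⟩ := Nat.exists_infinite_primes (⌊x⌋₊ + 1)
    have hmono := hGmono ⌊x⌋₊ (p' - 1) (by omega)
    have hlt := hall p' hp'
    have hsum := one_add_sum_le_prod ((Finset.Icc 1 ⌊x⌋₊).filter Nat.Prime)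
      (fun p => ‖a p‖ ^ 2 / (p : ℝ)) (fun i _ => ht0 i)
    have hb : ∑ p ∈ (Finset.Icc 1 ⌊x⌋₊).filter Nat.Prime,
        ‖a p‖ ^ 2 / (p : ℝ) ≤ 2 * C := by linarith
    have hlogx : Real.log 2 ≤ Real.log x := Real.log_le_log (by norm_num) hx
    calc ∑ p ∈ (Finset.Icc 1 ⌊x⌋₊).filter Nat.Prime,
        ‖a p‖ ^ 2 / (p : ℝ) ≤ 2 * C := hb
      _ = 2 * C / Real.log 2 * Real.log 2 := (div_mul_cancel₀ _ (ne_of_gt hlog2)).symm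
      _ ≤ 2 * C / Real.log 2 * Real.log x :=
          mul_le_mul_of_nonneg_left hlogx (by positivity)
      _ ≤ (2 * C / Real.log 2 + 1) * Real.log x := by nlinarith [hlogx, hlog2]
  · push_neg at hall
    obtain ⟨p₁, hp₁, hR₁⟩ := hall
    set A := ∑ q ∈ (Finset.Icc 1 p₁).filter Nat.Prime,
      ‖a q‖ ^ 2 / (q : ℝ) with hA
    have hA0 : 0 ≤ A := Finset.sum_nonneg fun q _ => ht0 q
    set K := 2 * (1 + 2 * C) with hK
    have hK0 : 0 < K := by nlinarith
    have hC'0 : 0 ≤ (A + K * Real.log C) / Real.log 2 := by positivity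
    refine ⟨(A + K * Real.log C) / Real.log 2 + K + 1, by linarith, ?_⟩
    intro x hx
    have hsplit := Finset.sum_filter_add_sum_filter_not
      ((Finset.Icc 1 ⌊x⌋₊).filter Nat.Prime) (fun p => p < p₁)
      (fun p => ‖a p‖ ^ 2 / (p : ℝ))
    have hsub1 : (((Finset.Icc 1 ⌊x⌋₊).filter Nat.Prime).filter (fun p => p < p₁))
        ⊆ (Finset.Icc 1 p₁).filter Nat.Prime := by
      intro q hq
      simp only [Finset.mem_filter, Finset.mem_Icc] at hq ⊢
      exact ⟨⟨hq.1.1.1, by omega⟩, hq.1.2⟩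
    have h1 : ∑ p ∈ ((Finset.Icc 1 ⌊x⌋₊).filter Nat.Prime).filter (fun p => p < p₁),
        ‖a p‖ ^ 2 / (p : ℝ) ≤ A :=
      Finset.sum_le_sum_of_subset_of_nonneg hsub1 (fun p _ _ => ht0 p)
    have hssub : ((Finset.Icc 1 ⌊x⌋₊).filter Nat.Prime).filter (fun p => ¬ p < p₁)
        ⊆ (Finset.Icc 1 ⌊x⌋₊).filter Nat.Prime := Finset.filter_subset _ _
    have hsM : ∀ p ∈ ((Finset.Icc 1 ⌊x⌋₊).filter Nat.Prime).filter (fun p => ¬ p < p₁),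
        ‖a p‖ ^ 2 / (p : ℝ) ≤ 2 * C := by
      intro p hp
      have hpp : p.Prime := (Finset.mem_filter.mp (hssub hp)).2
      have hge : p₁ ≤ p := not_lt.mp (Finset.mem_filter.mp hp).2
      exact key4 p hpp (le_trans hR₁ (hGmono (p₁ - 1) (p - 1) (by omega)))
    have h2 := key3 x hx _ hssub (2 * C) (by linarith) hsM
    have hlogx : Real.log 2 ≤ Real.log x := Real.log_le_log (by norm_num) hx
    have hlogx0 : 0 < Real.log x := lt_of_lt_of_le hlog2 hlogx
    have e1 : A + K * Real.log C = (A + K * Real.log C) / Real.log 2 * Real.log 2 :=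
      (div_mul_cancel₀ _ (ne_of_gt hlog2)).symm
    have e2 : (A + K * Real.log C) / Real.log 2 * Real.log 2
        ≤ (A + K * Real.log C) / Real.log 2 * Real.log x :=
      mul_le_mul_of_nonneg_left hlogx hC'0
    have hmain : ∑ p ∈ (Finset.Icc 1 ⌊x⌋₊).filter Nat.Prime,
        ‖a p‖ ^ 2 / (p : ℝ)
        ≤ A + K * (Real.log C + Real.log x) := by
      rw [← hsplit, hK]
      linarith [h1, h2]
    calc ∑ p ∈ (Finset.Icc 1 ⌊x⌋₊).filter Nat.Prime,
        ‖a p‖ ^ 2 / (p : ℝ)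
        ≤ A + K * (Real.log C + Real.log x) := hmain
      _ = (A + K * Real.log C) + K * Real.log x := by ring
      _ ≤ (A + K * Real.log C) / Real.log 2 * Real.log x + K * Real.log x := by linarith
      _ ≤ ((A + K * Real.log C) / Real.log 2 + K + 1) * Real.log x := by nlinarith [hlogx0]
end

section
/- Let a : ℕ → ℂ be an arithmetic function and suppose there are constants c > 0 and K such that |∑_{p≤x, p prime} |a(p)|²/p − c log log x| ≤ K for all x ≥ 3. Then there exists a constant C > 0 such that ∑_{p≤x, p prime} |a(p)|/√p ≤ C √(x log log x / log x) for all x ≥ 16. -/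
open Finset

/-- Chebyshev-type bound: the number of primes up to `x` is at most `5 x / log x`. -/
lemma prime_card_le (x : ℝ) (hx : 16 ≤ x) :
    (((Finset.Icc 1 ⌊x⌋₊).filter Nat.Prime).card : ℝ) ≤ 5 * x / Real.log x := by
  have hx0 : (0 : ℝ) < x := by linarith
  have hlog : 0 < Real.log x := Real.log_pos (by linarith)
  have hs : 0 < Real.sqrt x := Real.sqrt_pos.mpr hx0
  set n := ⌊x⌋₊ with hn
  have hnx : (n : ℝ) ≤ x := Nat.floor_le hx0.le
  set S := (Finset.Icc 1 n).filter Nat.Prime with hS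
  set T := S.filter (fun p : ℕ => Real.sqrt x < (p : ℝ)) with hT
  set U := S.filter (fun p : ℕ => ¬ Real.sqrt x < (p : ℝ)) with hU
  have hcard : T.card + U.card = S.card := Finset.card_filter_add_card_filter_not _
  -- Bound on U: primes below √x
  have hUsub : U ⊆ Finset.Icc 1 ⌊Real.sqrt x⌋₊ := by
    intro p hp
    simp only [hU, hS, Finset.mem_filter, Finset.mem_Icc] at hp ⊢
    refine ⟨hp.1.2.one_lt.le, Nat.le_floor (le_of_not_gt hp.2)⟩
  have hUcard : (U.card : ℝ) ≤ Real.sqrt x := by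
    have := Finset.card_le_card hUsub
    have h2 : (Finset.Icc 1 ⌊Real.sqrt x⌋₊).card = ⌊Real.sqrt x⌋₊ := by
      simp [Nat.card_Icc]
    calc (U.card : ℝ) ≤ (⌊Real.sqrt x⌋₊ : ℝ) := by exact_mod_cast h2 ▸ this
      _ ≤ Real.sqrt x := Nat.floor_le hs.le
  have hU2 : (U.card : ℝ) ≤ 2 * x / Real.log x := by
    have hlogsqrt : Real.log (Real.sqrt x) ≤ Real.sqrt x :=
      (Real.log_le_sub_one_of_pos hs).trans (by linarith)
    have := Real.log_sqrt hx0.le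
    have hxx : Real.sqrt x * Real.sqrt x = x := Real.mul_self_sqrt hx0.le
    rw [le_div_iff₀ hlog]
    nlinarith [hUcard, hs.le, hlog.le, Real.log_nonneg (show (1:ℝ) ≤ Real.sqrt x by nlinarith)]
  -- Bound on T via primorial ≤ 4^n
  have hTprod : Real.sqrt x ^ T.card ≤ ((primorial n : ℕ) : ℝ) := by
    have h1 : Real.sqrt x ^ T.card ≤ ∏ p ∈ T, (p : ℝ) := by
      rw [← Finset.prod_const]
      refine Finset.prod_le_prod (fun _ _ => hs.le) ?_
      intro p hp
      simp only [hT, Finset.mem_filter] at hp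
      exact hp.2.le
    have h2 : ∏ p ∈ T, p ≤ primorial n := by
      refine Finset.prod_le_prod_of_subset_of_one_le' ?_ (fun i hi _ => ?_)
      · intro p hp
        simp only [hT, hS, Finset.mem_filter, Finset.mem_Icc] at hp
        simp only [Finset.mem_filter, Finset.mem_range]
        exact ⟨Nat.lt_succ_of_le hp.1.1.2, hp.1.2⟩
      · exact ((Finset.mem_filter.mp hi).2).one_lt.le
    calc Real.sqrt x ^ T.card ≤ ∏ p ∈ T, (p : ℝ) := h1
      _ = ((∏ p ∈ T, p : ℕ) : ℝ) := by push_cast; ring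
      _ ≤ _ := by exact_mod_cast h2
  have hT4 : Real.sqrt x ^ T.card ≤ (4 : ℝ) ^ n := by
    refine hTprod.trans ?_
    exact_mod_cast primorial_le_4_pow n
  have hTcard : (T.card : ℝ) * (Real.log x / 2) ≤ x * Real.log 4 := by
    have hl := Real.log_le_log (by positivity) hT4
    rw [Real.log_pow, Real.log_pow, Real.log_sqrt hx0.le] at hl
    have h4 : (0:ℝ) ≤ Real.log 4 := Real.log_nonneg (by norm_num)
    calc (T.card : ℝ) * (Real.log x / 2) ≤ (n : ℝ) * Real.log 4 := hl
      _ ≤ x * Real.log 4 := by nlinarith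
  have hT3 : (T.card : ℝ) ≤ 3 * x / Real.log x := by
    have h4 : Real.log 4 ≤ 1.5 := by
      have : Real.log 4 = 2 * Real.log 2 := by
        rw [show (4:ℝ) = 2 ^ 2 by norm_num, Real.log_pow]; push_cast; ring
      have := Real.log_two_lt_d9
      nlinarith
    rw [le_div_iff₀ hlog]
    nlinarith [hx0.le]
  have : (S.card : ℝ) = (T.card : ℝ) + (U.card : ℝ) := by exact_mod_cast hcard.symm
  rw [this]
  have : 3 * x / Real.log x + 2 * x / Real.log x = 5 * x / Real.log x := by ring
  linarith

/-- **Cauchy–Schwarz bound for `∑_{p≤x} |a(p)|/√p`.**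
If `∑_{p≤x} |a(p)|²/p = c log log x + O(1)`, then
`∑_{p≤x} |a(p)|/√p ≪ √(x log log x / log x)`. -/
theorem sum_over_sqrt_bound (a : ℕ → ℂ) (c : ℝ) (hc : 0 < c) (K : ℝ)
    (h : ∀ x : ℝ, 3 ≤ x →
      |(∑ p ∈ (Finset.Icc 1 ⌊x⌋₊).filter Nat.Prime,
        ‖a p‖ ^ 2 / (p : ℝ)) - c * Real.log (Real.log x)| ≤ K) :
    ∃ C : ℝ, 0 < C ∧ ∀ x : ℝ, 16 ≤ x →
      ∑ p ∈ (Finset.Icc 1 ⌊x⌋₊).filter Nat.Prime,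
        ‖a p‖ / Real.sqrt (p : ℝ)
      ≤ C * Real.sqrt (x * Real.log (Real.log x) / Real.log x) := by
  refine ⟨Real.sqrt (5 * (c + |K|)), Real.sqrt_pos.mpr (by positivity), ?_⟩
  intro x hx
  have hx0 : (0:ℝ) < x := by linarith
  have hlog : 0 < Real.log x := Real.log_pos (by linarith)
  -- log log x ≥ 1
  have hll : 1 ≤ Real.log (Real.log x) := by
    have h16 : Real.exp 1 ≤ Real.log x := by
      have h1 : Real.log 16 ≤ Real.log x := Real.log_le_log (by norm_num) (by linarith)
      have h2 : Real.log 16 = 4 * Real.log 2 := by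
        rw [show (16:ℝ) = 2 ^ 4 by norm_num, Real.log_pow]; push_cast; ring
      have := Real.log_two_gt_d9
      have := Real.exp_one_lt_d9
      nlinarith
    calc (1:ℝ) = Real.log (Real.exp 1) := (Real.log_exp 1).symm
      _ ≤ Real.log (Real.log x) :=
        Real.log_le_log (Real.exp_pos 1) h16
  set S := (Finset.Icc 1 ⌊x⌋₊).filter Nat.Prime with hS
  set L := ∑ p ∈ S, ‖a p‖ / Real.sqrt (p : ℝ) with hL
  have hLnn : 0 ≤ L := Finset.sum_nonneg fun p _ => by positivity
  -- Cauchy-Schwarz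
  have hCS : L ^ 2 ≤ (S.card : ℝ) * ∑ p ∈ S, ‖a p‖ ^ 2 / (p : ℝ) := by
    have := sq_sum_le_card_mul_sum_sq (s := S)
      (f := fun p => ‖a p‖ / Real.sqrt (p : ℝ))
    refine this.trans_eq ?_
    congr 1
    refine Finset.sum_congr rfl fun p hp => ?_
    have hp1 : (1:ℕ) ≤ p := (Finset.mem_filter.mp hp).2.one_lt.le
    have hp0 : (0:ℝ) < (p:ℝ) := by exact_mod_cast hp1
    rw [div_pow, Real.sq_sqrt hp0.le]
  have hsum : ∑ p ∈ S, ‖a p‖ ^ 2 / (p : ℝ) ≤ (c + |K|) * Real.log (Real.log x) := by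
    have := h x (by linarith)
    have h1 : ∑ p ∈ S, ‖a p‖ ^ 2 / (p : ℝ)
        ≤ c * Real.log (Real.log x) + K := by
      have := abs_le.mp this
      linarith [this.2]
    have h2 : K ≤ |K| := le_abs_self K
    nlinarith [abs_nonneg K]
  have hcardbd := prime_card_le x hx
  have hQnn : (0:ℝ) ≤ (c + |K|) * Real.log (Real.log x) := by positivity
  have key : L ^ 2 ≤ (5 * (c + |K|)) * (x * Real.log (Real.log x) / Real.log x) := by
    calc L ^ 2 ≤ (S.card : ℝ) * ∑ p ∈ S, ‖a p‖ ^ 2 / (p : ℝ) := hCS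
      _ ≤ (S.card : ℝ) * ((c + |K|) * Real.log (Real.log x)) := by
          exact mul_le_mul_of_nonneg_left hsum (Nat.cast_nonneg _)
      _ ≤ (5 * x / Real.log x) * ((c + |K|) * Real.log (Real.log x)) :=
          mul_le_mul_of_nonneg_right hcardbd hQnn
      _ = (5 * (c + |K|)) * (x * Real.log (Real.log x) / Real.log x) := by ring
  have hynn : (0:ℝ) ≤ x * Real.log (Real.log x) / Real.log x := by positivity
  calc L = Real.sqrt (L ^ 2) := (Real.sqrt_sq hLnn).symm
    _ ≤ Real.sqrt ((5 * (c + |K|)) * (x * Real.log (Real.log x) / Real.log x)) :=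
        Real.sqrt_le_sqrt key
    _ = Real.sqrt (5 * (c + |K|)) * Real.sqrt (x * Real.log (Real.log x) / Real.log x) :=
        Real.sqrt_mul (by positivity) _
end

section
/- Let a : ℕ → ℂ be an arithmetic function and suppose there are constants c > 0 and K such that |∑_{p≤x, p prime} |a(p)|²/p − c log log x| ≤ K for all x ≥ 3. Then 2^{−r} · log ∏_{p ≤ c·2^r, p prime} (1 + 2^r |a(p)|²/p) → 0 as r → ∞; that is, for every ε > 0 there exists R such that for all real r ≥ R, ∏_{p ≤ c·2^r, p prime} (1 + 2^r |a(p)|²/p) ≤ exp(ε · 2^r). -/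
lemma one_add_sq_le_exp {v : ℝ} (hv : 0 ≤ v) : 1 + v ^ 2 ≤ Real.exp v := by
  have h := Real.sum_le_exp_of_nonneg hv 4
  have : ∑ i ∈ Finset.range 4, v ^ i / i.factorial
      = 1 + v + v^2/2 + v^3/6 := by
    simp [Finset.sum_range_succ, Nat.factorial]
  rw [this] at h
  nlinarith [sq_nonneg (2*v - 3), sq_nonneg v, h]

lemma one_add_le_exp_sqrt {u : ℝ} (hu : 0 ≤ u) : 1 + u ≤ Real.exp (Real.sqrt u) := by
  have h := one_add_sq_le_exp (Real.sqrt_nonneg u)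
  rwa [Real.sq_sqrt hu] at h

lemma log_le_two_sqrt {y : ℝ} (hy : 0 < y) : Real.log y ≤ 2 * Real.sqrt y := by
  have h1 : Real.log (Real.sqrt y) ≤ Real.sqrt y - 1 :=
    Real.log_le_sub_one_of_pos (Real.sqrt_pos.mpr hy)
  rw [Real.log_sqrt hy.le] at h1
  nlinarith [Real.sqrt_nonneg y]

lemma sum_sqrt_le {s : Finset ℕ} {f : ℕ → ℝ} (hf : ∀ i ∈ s, 0 ≤ f i) :
    ∑ i ∈ s, Real.sqrt (f i) ≤ Real.sqrt (s.card * ∑ i ∈ s, f i) := by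
  have h := sq_sum_le_card_mul_sum_sq (s := s) (f := fun i => Real.sqrt (f i))
  have h2 : ∑ i ∈ s, Real.sqrt (f i) ^ 2 = ∑ i ∈ s, f i :=
    Finset.sum_congr rfl fun i hi => Real.sq_sqrt (hf i hi)
  rw [h2] at h
  have h3 : 0 ≤ ∑ i ∈ s, Real.sqrt (f i) :=
    Finset.sum_nonneg fun i _ => Real.sqrt_nonneg _
  calc ∑ i ∈ s, Real.sqrt (f i)
      = Real.sqrt ((∑ i ∈ s, Real.sqrt (f i)) ^ 2) := (Real.sqrt_sq h3).symm
    _ ≤ Real.sqrt (s.card * ∑ i ∈ s, f i) := Real.sqrt_le_sqrt h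

lemma cheb_bound (n : ℕ) (hn : 2 ≤ n) :
    (((Finset.Icc 1 n).filter Nat.Prime).card : ℝ)
      ≤ Real.sqrt n + 3 * n / Real.log n := by
  classical
  set m := Nat.sqrt n with hm
  set P := (Finset.Icc 1 n).filter Nat.Prime with hP
  set P1 := P.filter (fun p => p ≤ m) with hP1
  set P2 := P.filter (fun p => ¬ p ≤ m) with hP2
  have hcard : P1.card + P2.card = P.card := Finset.card_filter_add_card_filter_not _
  have hm1 : 1 ≤ m := by
    have h := Nat.sqrt_le_sqrt hn
    exact le_trans (by norm_num : 1 ≤ Nat.sqrt 2) h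
  -- P1 card ≤ m
  have hc1 : P1.card ≤ m := by
    have : P1 ⊆ Finset.Icc 1 m := by
      intro p hp
      simp only [hP1, hP, Finset.mem_filter, Finset.mem_Icc] at hp
      exact Finset.mem_Icc.mpr ⟨hp.1.1.1, hp.2⟩
    simpa using Finset.card_le_card this
  -- (m+1)^(P2.card) ≤ 4^n
  have hkey : (m + 1) ^ P2.card ≤ 4 ^ n := by
    calc (m + 1) ^ P2.card ≤ ∏ p ∈ P2, p := by
          apply Finset.pow_card_le_prod
          intro p hp
          simp only [hP2, hP, Finset.mem_filter, Finset.mem_Icc] at hp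
          omega
      _ ≤ ∏ p ∈ (Finset.range (n+1)).filter Nat.Prime, p := by
          apply Finset.prod_le_prod_of_subset_of_one_le'
          · intro p hp
            simp only [hP2, hP, Finset.mem_filter, Finset.mem_Icc, Finset.mem_range] at hp ⊢
            exact ⟨by omega, hp.1.2⟩
          · intro p hp _
            simp only [Finset.mem_filter] at hp
            exact hp.2.one_lt.le
      _ = primorial n := rfl
      _ ≤ 4 ^ n := primorial_le_4_pow n
  -- real log version
  have hlogn : 0 < Real.log n := Real.log_pos (by exact_mod_cast hn)
  have hmsqrt : (m : ℝ) ≤ Real.sqrt n := by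
    rw [show (m : ℝ) = Real.sqrt ((m : ℝ)^2) from (Real.sqrt_sq (by positivity)).symm]
    apply Real.sqrt_le_sqrt
    have := Nat.sqrt_le' n
    exact_mod_cast this
  have hm1sqrt : Real.sqrt n ≤ (m : ℝ) + 1 := by
    have h1 : (n : ℝ) ≤ ((m : ℝ) + 1)^2 := by
      have h := Nat.lt_succ_sqrt' n
      have h2 : (n:ℝ) < ((m:ℝ)+1)*((m:ℝ)+1) := by
        have h3 : n < (m+1)^2 := by simpa using h
        have h4 : (n:ℝ) < ((m:ℝ)+1)^2 := by exact_mod_cast h3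
        nlinarith
      nlinarith
    calc Real.sqrt n ≤ Real.sqrt (((m:ℝ)+1)^2) := Real.sqrt_le_sqrt h1
      _ = (m : ℝ) + 1 := Real.sqrt_sq (by positivity)
  have hlogm : Real.log n / 2 ≤ Real.log ((m : ℝ) + 1) := by
    rw [← Real.log_sqrt (by positivity)]
    exact Real.log_le_log (Real.sqrt_pos.mpr (by positivity)) hm1sqrt
  have hreal : (P2.card : ℝ) * Real.log ((m : ℝ) + 1) ≤ n * Real.log 4 := by
    have h1 : ((m : ℝ) + 1) ^ P2.card ≤ (4 : ℝ) ^ n := by exact_mod_cast hkey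
    have h2 := Real.log_le_log (by positivity) h1
    rwa [Real.log_pow, Real.log_pow] at h2
  have hlog4 : Real.log 4 < 1.4 := by
    have h2 : Real.log 4 = 2 * Real.log 2 := by
      rw [show (4:ℝ) = 2^2 by norm_num, Real.log_pow]; push_cast; ring
    have := Real.log_two_lt_d9
    rw [h2]; linarith
  have hc2 : (P2.card : ℝ) * Real.log n ≤ 3 * n := by
    have h1 : (P2.card : ℝ) * (Real.log n / 2) ≤ (P2.card : ℝ) * Real.log ((m:ℝ)+1) :=
      mul_le_mul_of_nonneg_left hlogm (by positivity)
    have h3 : (0:ℝ) ≤ (n:ℝ) := by positivity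
    nlinarith [hreal]
  have hfin : (P.card : ℝ) ≤ (m : ℝ) + (P2.card : ℝ) := by
    have : (P.card : ℝ) = (P1.card : ℝ) + (P2.card : ℝ) := by exact_mod_cast hcard.symm
    rw [this]
    have : (P1.card : ℝ) ≤ (m : ℝ) := by exact_mod_cast hc1
    linarith
  have hc2' : (P2.card : ℝ) ≤ 3 * n / Real.log n := by
    rw [le_div_iff₀ hlogn]; exact hc2
  linarith

set_option maxHeartbeats 1600000 in
lemma core_bound (a : ℕ → ℂ) (c K ε ε' D x t L : ℝ) (n : ℕ)
    (hc : 0 < c) (hε : 0 < ε) (ht0 : 0 < t)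
    (hε'def : ε' = ε ^ 2 / c) (hDdef : D = 2 * c + |K| + 1)
    (hxeq : x = c * t) (hLdef : L = Real.log x) (hndef : n = ⌊x⌋₊)
    (hc1 : Real.exp ((12 * D / ε') ^ 2) ≤ x)
    (hc2 : (2 * (2 * D / ε') ^ 2) ^ 2 ≤ x)
    (hc3 : Real.exp 2 ≤ x)
    (hx9 : 9 ≤ x)
    (hSle : ∑ p ∈ (Finset.Icc 1 n).filter Nat.Prime,
        ‖a p‖ ^ 2 / (p : ℝ) ≤ c * Real.log L + K) :
    ∏ p ∈ (Finset.Icc 1 n).filter Nat.Prime,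
        (1 + t * ‖a p‖ ^ 2 / (p : ℝ)) ≤ Real.exp (ε * t) := by
  have hε'0 : 0 < ε' := by rw [hε'def]; positivity
  have hD0 : 0 < D := by rw [hDdef]; positivity
  have hx0 : 0 < x := by rw [hxeq]; positivity
  have hx3 : (3:ℝ) ≤ x := by linarith
  have hL2 : 2 ≤ L := by
    have h1 : Real.log (Real.exp 2) ≤ Real.log x := Real.log_le_log (Real.exp_pos 2) hc3
    rwa [Real.log_exp, ← hLdef] at h1
  have hL0 : 0 < L := by linarith
  have hL12 : (12 * D / ε') ^ 2 ≤ L := by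
    have h1 : Real.log (Real.exp ((12 * D / ε') ^ 2)) ≤ Real.log x :=
      Real.log_le_log (Real.exp_pos _) hc1
    rwa [Real.log_exp, ← hLdef] at h1
  have hsqx : 0 < Real.sqrt x := Real.sqrt_pos.mpr hx0
  have hmulself : Real.sqrt x * Real.sqrt x = x := Real.mul_self_sqrt hx0.le
  have hsx3 : 3 ≤ Real.sqrt x := by
    have h9 : Real.sqrt 9 ≤ Real.sqrt x := Real.sqrt_le_sqrt hx9
    rwa [show (9:ℝ) = 3 ^ 2 by norm_num, Real.sqrt_sq (by norm_num : (0:ℝ) ≤ 3)] at h9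
  have hLx : L ≤ (ε' / (2 * D)) ^ 2 * x := by
    have h1 : L ≤ 2 * Real.sqrt x := by rw [hLdef]; exact log_le_two_sqrt hx0
    have h2 : 2 * (2 * D / ε') ^ 2 ≤ Real.sqrt x := by
      have h3 : Real.sqrt ((2 * (2 * D / ε') ^ 2) ^ 2) ≤ Real.sqrt x := Real.sqrt_le_sqrt hc2
      rwa [Real.sqrt_sq (by positivity)] at h3
    have hid : (ε' / (2 * D)) ^ 2 * (2 * (2 * D / ε') ^ 2) = 2 := by
      field_simp
    nlinarith [sq_nonneg (ε' / (2 * D)), hsqx.le]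
  have hn2 : 2 ≤ n := by
    rw [hndef]; exact Nat.le_floor (by push_cast; linarith)
  have hnx : (n : ℝ) ≤ x := by rw [hndef]; exact Nat.floor_le hx0.le
  have hn_ge : Real.sqrt x ≤ (n : ℝ) := by
    have h1 : x - 1 < (n : ℝ) := by rw [hndef]; exact Nat.sub_one_lt_floor x
    nlinarith
  have hlogn : L / 2 ≤ Real.log n := by
    have h1 : Real.log (Real.sqrt x) ≤ Real.log n := Real.log_le_log hsqx hn_ge
    rwa [Real.log_sqrt hx0.le, ← hLdef] at h1
  have hlogn0 : 0 < Real.log n := by linarith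
  set P := (Finset.Icc 1 n).filter Nat.Prime with hP
  have hS0 : 0 ≤ ∑ p ∈ P, ‖a p‖ ^ 2 / (p : ℝ) := by
    apply Finset.sum_nonneg; intro p hp; positivity
  have hsqL1 : 1 ≤ Real.sqrt L := by
    have h1 : Real.sqrt 1 ≤ Real.sqrt L := Real.sqrt_le_sqrt (by linarith)
    rwa [Real.sqrt_one] at h1
  have hB : ∑ p ∈ P, ‖a p‖ ^ 2 / (p : ℝ) ≤ D * Real.sqrt L := by
    have h1 : Real.log L ≤ 2 * Real.sqrt L := log_le_two_sqrt hL0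
    have h3 : c * Real.log L ≤ c * (2 * Real.sqrt L) := mul_le_mul_of_nonneg_left h1 hc.le
    have h2 : K ≤ |K| * Real.sqrt L := by
      have h5 : 0 ≤ |K| * (Real.sqrt L - 1) := mul_nonneg (abs_nonneg K) (by linarith)
      have h6 := le_abs_self K
      linarith
    have h4 : D * Real.sqrt L = 2 * (c * Real.sqrt L) + |K| * Real.sqrt L + Real.sqrt L := by
      rw [hDdef]; ring
    linarith [hSle, Real.sqrt_nonneg L]
  have hcard : (P.card : ℝ) ≤ Real.sqrt x + 6 * x / L := by
    have h1 := cheb_bound n hn2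
    have h2 : Real.sqrt n ≤ Real.sqrt x := Real.sqrt_le_sqrt hnx
    have h3 : 3 * (n:ℝ) / Real.log n ≤ 3 * x / (L / 2) := by
      apply div_le_div₀ (by positivity) (by nlinarith) (by linarith) hlogn
    have h4 : 3 * x / (L / 2) = 6 * x / L := by
      field_simp; ring
    rw [h4] at h3
    calc (P.card : ℝ) ≤ Real.sqrt n + 3 * n / Real.log n := h1
      _ ≤ Real.sqrt x + 6 * x / L := by linarith
  have hkey : (P.card : ℝ) * (∑ p ∈ P, ‖a p‖ ^ 2 / (p : ℝ)) ≤ ε ^ 2 * t := by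
    have hcard0 : (0:ℝ) ≤ (P.card : ℝ) := by positivity
    have step1 : (P.card : ℝ) * (∑ p ∈ P, ‖a p‖ ^ 2 / (p : ℝ))
        ≤ (Real.sqrt x + 6 * x / L) * (D * Real.sqrt L) :=
      mul_le_mul hcard hB hS0 (by nlinarith [Real.sqrt_nonneg x, hL0, hx0])
    have hb1 : D * (Real.sqrt x * Real.sqrt L) ≤ (ε' / 2) * x := by
      have h1 : Real.sqrt x * Real.sqrt L = Real.sqrt (x * L) :=
        (Real.sqrt_mul hx0.le L).symm
      have h2 : x * L ≤ (ε' / (2 * D) * x) ^ 2 := by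
        have h5 := mul_le_mul_of_nonneg_left hLx hx0.le
        calc x * L ≤ x * ((ε' / (2 * D)) ^ 2 * x) := h5
          _ = (ε' / (2 * D) * x) ^ 2 := by ring
      have h3 : Real.sqrt (x * L) ≤ ε' / (2 * D) * x := by
        calc Real.sqrt (x * L) ≤ Real.sqrt ((ε' / (2 * D) * x) ^ 2) :=
              Real.sqrt_le_sqrt h2
          _ = ε' / (2 * D) * x := Real.sqrt_sq (by positivity)
      rw [h1]
      calc D * Real.sqrt (x * L) ≤ D * (ε' / (2 * D) * x) :=
            mul_le_mul_of_nonneg_left h3 hD0.le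
        _ = (ε' / 2) * x := by field_simp
    have hb2 : 6 * x / L * (D * Real.sqrt L) ≤ (ε' / 2) * x := by
      have h1 : 12 * D / ε' ≤ Real.sqrt L := by
        have h2 : Real.sqrt ((12 * D / ε') ^ 2) ≤ Real.sqrt L := Real.sqrt_le_sqrt hL12
        rwa [Real.sqrt_sq (by positivity)] at h2
      have hsL0 : 0 < Real.sqrt L := by linarith
      have hLss : Real.sqrt L * Real.sqrt L = L := Real.mul_self_sqrt hL0.le
      have h3 : 6 * x / L * (D * Real.sqrt L) = 6 * D * x / Real.sqrt L := by
        rw [eq_div_iff hsL0.ne', div_mul_eq_mul_div, div_mul_eq_mul_div, div_eq_iff hL0.ne']; linear_combination (6 * x * D) * hLss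
      rw [h3, div_le_iff₀ hsL0]
      have h4 : (ε' / 2) * x * (12 * D / ε') ≤ (ε' / 2) * x * Real.sqrt L :=
        mul_le_mul_of_nonneg_left h1 (by positivity)
      have h5 : (ε' / 2) * x * (12 * D / ε') = 6 * D * x := by
        field_simp; ring
      linarith
    have hε't : ε' * x = ε ^ 2 * t := by
      rw [hε'def, hxeq]; field_simp
    calc (P.card : ℝ) * (∑ p ∈ P, ‖a p‖ ^ 2 / (p : ℝ))
        ≤ (Real.sqrt x + 6 * x / L) * (D * Real.sqrt L) := step1
      _ = D * (Real.sqrt x * Real.sqrt L) + 6 * x / L * (D * Real.sqrt L) := by ring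
      _ ≤ (ε' / 2) * x + (ε' / 2) * x := add_le_add hb1 hb2
      _ = ε' * x := by ring
      _ = ε ^ 2 * t := hε't
  calc ∏ p ∈ P, (1 + t * ‖a p‖ ^ 2 / (p : ℝ))
      ≤ ∏ p ∈ P, Real.exp (Real.sqrt (t * (‖a p‖ ^ 2 / (p : ℝ)))) := by
        apply Finset.prod_le_prod
        · intro p hp; positivity
        · intro p hp
          rw [mul_div_assoc]
          exact one_add_le_exp_sqrt (by positivity)
    _ = Real.exp (∑ p ∈ P, Real.sqrt (t * (‖a p‖ ^ 2 / (p : ℝ)))) :=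
        (Real.exp_sum P _).symm
    _ ≤ Real.exp (ε * t) := by
        apply Real.exp_le_exp.mpr
        have h1 : ∑ p ∈ P, Real.sqrt (t * (‖a p‖ ^ 2 / (p : ℝ)))
            = Real.sqrt t * ∑ p ∈ P, Real.sqrt (‖a p‖ ^ 2 / (p : ℝ)) := by
          rw [Finset.mul_sum]
          exact Finset.sum_congr rfl fun p hp => Real.sqrt_mul ht0.le _
        rw [h1]
        have h2 : ∑ p ∈ P, Real.sqrt (‖a p‖ ^ 2 / (p : ℝ))
            ≤ Real.sqrt ((P.card : ℝ) * ∑ p ∈ P, ‖a p‖ ^ 2 / (p : ℝ)) :=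
          sum_sqrt_le fun p hp => by positivity
        calc Real.sqrt t * ∑ p ∈ P, Real.sqrt (‖a p‖ ^ 2 / (p : ℝ))
            ≤ Real.sqrt t * Real.sqrt ((P.card : ℝ) * ∑ p ∈ P, ‖a p‖ ^ 2 / (p : ℝ)) :=
              mul_le_mul_of_nonneg_left h2 (Real.sqrt_nonneg t)
          _ = Real.sqrt (t * ((P.card : ℝ) * ∑ p ∈ P, ‖a p‖ ^ 2 / (p : ℝ))) :=
              (Real.sqrt_mul ht0.le _).symm
          _ ≤ Real.sqrt (t * (ε ^ 2 * t)) :=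
              Real.sqrt_le_sqrt (mul_le_mul_of_nonneg_left hkey ht0.le)
          _ = ε * t := by
              rw [show t * (ε ^ 2 * t) = (ε * t) ^ 2 by ring]
              exact Real.sqrt_sq (by positivity)

/-- **Small primes product estimate.** If `∑_{p≤x} |a(p)|²/p = c log log x + O(1)`,
then `2^{-r} log ∏_{p ≤ c 2^r}(1 + 2^r |a(p)|²/p) → 0` as `r → ∞`. -/
theorem small_primes_product (a : ℕ → ℂ) (c : ℝ) (hc : 0 < c) (K : ℝ)
    (h : ∀ x : ℝ, 3 ≤ x →
      |(∑ p ∈ (Finset.Icc 1 ⌊x⌋₊).filter Nat.Prime,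
        ‖a p‖ ^ 2 / (p : ℝ)) - c * Real.log (Real.log x)| ≤ K) :
    ∀ ε : ℝ, 0 < ε → ∃ R : ℝ, ∀ r : ℝ, R ≤ r →
      ∏ p ∈ (Finset.Icc 1 ⌊c * (2 : ℝ) ^ r⌋₊).filter Nat.Prime,
        (1 + (2 : ℝ) ^ r * ‖a p‖ ^ 2 / (p : ℝ))
      ≤ Real.exp (ε * (2 : ℝ) ^ r) := by
  intro ε hε
  obtain ⟨ε', hε'def⟩ : ∃ y : ℝ, y = ε ^ 2 / c := ⟨_, rfl⟩
  obtain ⟨D, hDdef⟩ : ∃ y : ℝ, y = 2 * c + |K| + 1 := ⟨_, rfl⟩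
  have hε'0 : 0 < ε' := by rw [hε'def]; positivity
  have hD0 : 0 < D := by rw [hDdef]; positivity
  obtain ⟨X₀, hX₀def⟩ : ∃ y : ℝ, y = Real.exp ((12 * D / ε') ^ 2)
      + (2 * (2 * D / ε') ^ 2) ^ 2 + Real.exp 2 + 9 := ⟨_, rfl⟩
  have hX₀pos : 0 < X₀ / c := by
    rw [hX₀def]
    have := Real.exp_pos ((12 * D / ε') ^ 2)
    have := Real.exp_pos (2 : ℝ)
    apply div_pos (by nlinarith [sq_nonneg ((2 * (2 * D / ε') ^ 2))]) hc
  refine ⟨Real.logb 2 (X₀ / c), fun r hr => ?_⟩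
  have ht0 : (0 : ℝ) < (2 : ℝ) ^ r := Real.rpow_pos_of_pos (by norm_num) r
  have hxX : X₀ ≤ c * (2 : ℝ) ^ r := by
    have h2 : (2 : ℝ) ^ (Real.logb 2 (X₀ / c)) ≤ (2 : ℝ) ^ r :=
      (Real.rpow_le_rpow_left_iff (by norm_num)).mpr hr
    rw [Real.rpow_logb (by norm_num) (by norm_num) hX₀pos] at h2
    calc X₀ = c * (X₀ / c) := by field_simp
      _ ≤ c * (2 : ℝ) ^ r := by nlinarith
  have he1 : 0 < Real.exp ((12 * D / ε') ^ 2) := Real.exp_pos _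
  have he2 : 0 < Real.exp (2:ℝ) := Real.exp_pos _
  have hs : 0 ≤ (2 * (2 * D / ε') ^ 2) ^ 2 := sq_nonneg _
  have hx9 : (9:ℝ) ≤ c * (2 : ℝ) ^ r := by rw [hX₀def] at hxX; linarith
  have hx3 : (3:ℝ) ≤ c * (2 : ℝ) ^ r := by linarith
  have hSle : ∑ p ∈ (Finset.Icc 1 ⌊c * (2 : ℝ) ^ r⌋₊).filter Nat.Prime,
      ‖a p‖ ^ 2 / (p : ℝ)
      ≤ c * Real.log (Real.log (c * (2 : ℝ) ^ r)) + K := by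
    have h1 := h (c * (2 : ℝ) ^ r) hx3
    rw [abs_le] at h1
    linarith [h1.2]
  exact core_bound a c K ε ε' D (c * (2 : ℝ) ^ r) ((2 : ℝ) ^ r)
    (Real.log (c * (2 : ℝ) ^ r)) ⌊c * (2 : ℝ) ^ r⌋₊ hc hε ht0 hε'def hDdef rfl rfl rfl
    (by rw [hX₀def] at hxX; linarith)
    (by rw [hX₀def] at hxX; linarith)
    (by rw [hX₀def] at hxX; linarith)
    hx9 hSle
end
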